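/- arXiv:2306.03345 — 9 statements merged into one kernel-verified Lean document; each statement's English description precedes it below -/
import Mathlib

section
/- Let G be an m×m symmetric positive definite real matrix, A a p×m real matrix, B an n×q real matrix, C a p×q real matrix, S a p×τ₁ real matrix and P a q×τ₂ real matrix such that SᵀAG⁻¹AᵀS and PᵀBᵀBP are invertible. For any m×n real matrix X define X⁺ = X − G⁻¹AᵀS(SᵀAG⁻¹AᵀS)⁻¹Sᵀ(AXB − C)P(PᵀBᵀBP)⁻¹PᵀBᵀ. Then SᵀAX⁺BP = SᵀCP, i.e. the updated iterate solves the sketched equation. -/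
open Matrix

/-- the sketch-and-project update solves the sketched equation
`Sᵀ A X⁺ B P = Sᵀ C P`. -/
theorem stmt_0 {m n p q τ₁ τ₂ : ℕ}
    (G : Matrix (Fin m) (Fin m) ℝ) (hG : G.PosDef)
    (A : Matrix (Fin p) (Fin m) ℝ) (B : Matrix (Fin n) (Fin q) ℝ)
    (C : Matrix (Fin p) (Fin q) ℝ)
    (S : Matrix (Fin p) (Fin τ₁) ℝ) (P : Matrix (Fin q) (Fin τ₂) ℝ)
    (hS : IsUnit (Sᵀ * A * G⁻¹ * Aᵀ * S).det)
    (hP : IsUnit (Pᵀ * Bᵀ * B * P).det)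
    (X : Matrix (Fin m) (Fin n) ℝ) :
    Sᵀ * A * (X - G⁻¹ * Aᵀ * S * (Sᵀ * A * G⁻¹ * Aᵀ * S)⁻¹ * Sᵀ *
        (A * X * B - C) * P * (Pᵀ * Bᵀ * B * P)⁻¹ * Pᵀ * Bᵀ) * B * P
      = Sᵀ * C * P := by
  have h1 : Sᵀ * A * G⁻¹ * Aᵀ * S * (Sᵀ * A * G⁻¹ * Aᵀ * S)⁻¹ = 1 :=
    Matrix.mul_nonsing_inv _ hS
  have h2 : (Pᵀ * Bᵀ * B * P)⁻¹ * (Pᵀ * Bᵀ * B * P) = 1 :=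
    Matrix.nonsing_inv_mul _ hP
  have key : Sᵀ * A * (G⁻¹ * Aᵀ * S * (Sᵀ * A * G⁻¹ * Aᵀ * S)⁻¹ * Sᵀ *
        (A * X * B - C) * P * (Pᵀ * Bᵀ * B * P)⁻¹ * Pᵀ * Bᵀ) * B * P
      = Sᵀ * (A * X * B - C) * P := by
    calc Sᵀ * A * (G⁻¹ * Aᵀ * S * (Sᵀ * A * G⁻¹ * Aᵀ * S)⁻¹ * Sᵀ *
          (A * X * B - C) * P * (Pᵀ * Bᵀ * B * P)⁻¹ * Pᵀ * Bᵀ) * B * P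
        = (Sᵀ * A * G⁻¹ * Aᵀ * S * (Sᵀ * A * G⁻¹ * Aᵀ * S)⁻¹) *
            (Sᵀ * (A * X * B - C) * P) *
            ((Pᵀ * Bᵀ * B * P)⁻¹ * (Pᵀ * Bᵀ * B * P)) := by
          simp only [Matrix.mul_assoc]
      _ = Sᵀ * (A * X * B - C) * P := by rw [h1, h2, Matrix.one_mul, Matrix.mul_one]
  rw [Matrix.mul_sub, Matrix.sub_mul, Matrix.sub_mul, key]
  simp only [Matrix.sub_mul, Matrix.mul_sub, Matrix.mul_assoc]
  abel
end

section
/- Let G be an m×m symmetric positive definite real matrix, A a p×m real matrix, B an n×q real matrix, C a p×q real matrix, S a p×τ₁ real matrix and P a q×τ₂ real matrix such that SᵀAG⁻¹AᵀS and PᵀBᵀBP are invertible. Fix an m×n real matrix Xᵏ and define X⁺ = Xᵏ − G⁻¹AᵀS(SᵀAG⁻¹AᵀS)⁻¹Sᵀ(AXᵏB − C)P(PᵀBᵀBP)⁻¹PᵀBᵀ. Then for every m×n real matrix W satisfying SᵀAWBP = SᵀCP one has ‖X⁺ − Xᵏ‖_{F(G)} ≤ ‖W − Xᵏ‖_{F(G)};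 that is, X⁺ minimizes the G-weighted Frobenius distance to Xᵏ over the solution set of the sketched equation. -/
open Matrix

/-- The `G`-weighted Frobenius norm `‖M‖_{F(G)} = √(Tr(Mᵀ G M))`. -/
noncomputable def normFG {m n : ℕ} (G : Matrix (Fin m) (Fin m) ℝ)
    (M : Matrix (Fin m) (Fin n) ℝ) : ℝ :=
  Real.sqrt (Matrix.trace (Mᵀ * G * M))

lemma trace_psd_nonneg {k : ℕ} {H : Matrix (Fin k) (Fin k) ℝ}
    (h : H.PosSemidef) : 0 ≤ H.trace := by
  rw [Matrix.trace]
  refine Finset.sum_nonneg fun i _ => ?_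
  simpa [Matrix.diag] using h.diag_nonneg (i := i)

/-- the sketch-and-project update is the closest point to `Xᵏ`
(in the `G`-weighted Frobenius norm) among all solutions of the sketched equation. -/
theorem stmt_1 {m n p q τ₁ τ₂ : ℕ}
    (G : Matrix (Fin m) (Fin m) ℝ) (hG : G.PosDef)
    (A : Matrix (Fin p) (Fin m) ℝ) (B : Matrix (Fin n) (Fin q) ℝ)
    (C : Matrix (Fin p) (Fin q) ℝ)
    (S : Matrix (Fin p) (Fin τ₁) ℝ) (P : Matrix (Fin q) (Fin τ₂) ℝ)
    (hS : IsUnit (Sᵀ * A * G⁻¹ * Aᵀ * S).det)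
    (hP : IsUnit (Pᵀ * Bᵀ * B * P).det)
    (Xk : Matrix (Fin m) (Fin n) ℝ)
    (W : Matrix (Fin m) (Fin n) ℝ)
    (hW : Sᵀ * A * W * B * P = Sᵀ * C * P) :
    normFG G ((Xk - G⁻¹ * Aᵀ * S * (Sᵀ * A * G⁻¹ * Aᵀ * S)⁻¹ * Sᵀ *
        (A * Xk * B - C) * P * (Pᵀ * Bᵀ * B * P)⁻¹ * Pᵀ * Bᵀ) - Xk)
      ≤ normFG G (W - Xk) := by
  have hGt : Gᵀ = G := hG.isHermitian.eq
  have hGit : (G⁻¹)ᵀ = G⁻¹ := by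
    rw [Matrix.transpose_nonsing_inv, hGt]
  have hGu : IsUnit G.det := hG.det_pos.ne'.isUnit
  set K := Sᵀ * A * G⁻¹ * Aᵀ * S with hK
  set J := Pᵀ * Bᵀ * B * P with hJ
  have hKt : Kᵀ = K := by
    simp [hK, Matrix.transpose_mul, hGit, Matrix.mul_assoc]
  have hJt : Jᵀ = J := by
    simp [hJ, Matrix.transpose_mul, Matrix.mul_assoc]
  have hKit : (K⁻¹)ᵀ = K⁻¹ := by rw [Matrix.transpose_nonsing_inv, hKt]
  have hJit : (J⁻¹)ᵀ = J⁻¹ := by rw [Matrix.transpose_nonsing_inv, hJt]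
  set E := W - Xk with hE
  set L := G⁻¹ * Aᵀ * S * K⁻¹ * Sᵀ * A with hL
  set R := B * P * J⁻¹ * Pᵀ * Bᵀ with hR
  -- rewrite the residual
  have h1 : Sᵀ * A * E * B * P = Sᵀ * C * P - Sᵀ * A * Xk * B * P := by
    rw [hE]
    simp only [Matrix.mul_sub, Matrix.sub_mul]
    rw [hW]
  have hres : Sᵀ * (A * Xk * B - C) * P = -(Sᵀ * A * E * B * P) := by
    have h2 : Sᵀ * (A * Xk * B - C) * P = Sᵀ * A * Xk * B * P - Sᵀ * C * P := by
      simp only [Matrix.mul_sub, Matrix.sub_mul, Matrix.mul_assoc]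
    rw [h2, h1, neg_sub]
  set D := L * E * R with hD
  have hDeq : (Xk - G⁻¹ * Aᵀ * S * K⁻¹ * Sᵀ *
        (A * Xk * B - C) * P * J⁻¹ * Pᵀ * Bᵀ) - Xk = D := by
    have h3 : G⁻¹ * Aᵀ * S * K⁻¹ * Sᵀ * (A * Xk * B - C) * P * J⁻¹ * Pᵀ * Bᵀ
        = G⁻¹ * Aᵀ * S * K⁻¹ * (Sᵀ * (A * Xk * B - C) * P) * J⁻¹ * Pᵀ * Bᵀ := by
      simp only [Matrix.mul_assoc]
    rw [h3, hres, hD, hL, hR]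
    simp only [Matrix.mul_neg, Matrix.neg_mul, sub_neg_eq_add, Matrix.mul_assoc]
    abel
  rw [hDeq]
  -- projection identities
  have hLt : Lᵀ = Aᵀ * S * K⁻¹ * Sᵀ * A * G⁻¹ := by
    simp [hL, Matrix.transpose_mul, hKit, hGit, Matrix.mul_assoc]
  have hGL : G * L = Aᵀ * (S * (K⁻¹ * (Sᵀ * A))) := by
    rw [hL]
    simp only [Matrix.mul_assoc]
    rw [← Matrix.mul_assoc G, Matrix.mul_nonsing_inv _ hGu, Matrix.one_mul]
  have hLGL : Lᵀ * G * L = G * L := by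
    rw [hGL, hLt, hL]
    have hGG : G⁻¹ * (G * (G⁻¹ * (Aᵀ * (S * (K⁻¹ * (Sᵀ * A))))))
        = G⁻¹ * (Aᵀ * (S * (K⁻¹ * (Sᵀ * A)))) := by
      rw [← Matrix.mul_assoc G⁻¹ G, Matrix.nonsing_inv_mul _ hGu, Matrix.one_mul]
    have hKK : K⁻¹ * (Sᵀ * (A * (G⁻¹ * (Aᵀ * (S * (K⁻¹ * (Sᵀ * A)))))))
        = K⁻¹ * (Sᵀ * A) := by
      have h4 : Sᵀ * (A * (G⁻¹ * (Aᵀ * (S * (K⁻¹ * (Sᵀ * A)))))) = K * (K⁻¹ * (Sᵀ * A)) := by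
        rw [hK]; simp only [Matrix.mul_assoc]
      rw [h4, ← Matrix.mul_assoc, Matrix.nonsing_inv_mul _ hS, Matrix.one_mul]
    simp only [Matrix.mul_assoc]
    rw [hGG, hKK]
  have hRt : Rᵀ = R := by
    simp [hR, Matrix.transpose_mul, hJit, Matrix.mul_assoc]
  have hRR : R * R = R := by
    rw [hR]
    have h5 : B * P * J⁻¹ * Pᵀ * Bᵀ * (B * P * J⁻¹ * Pᵀ * Bᵀ)
        = B * (P * (J⁻¹ * (J * (J⁻¹ * (Pᵀ * Bᵀ))))) := by
      rw [hJ]; simp only [Matrix.mul_assoc]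
    rw [h5, ← Matrix.mul_assoc J, Matrix.mul_nonsing_inv _ hP, Matrix.one_mul]
    simp only [Matrix.mul_assoc]
  -- key trace identity
  have hDt : Dᵀ = Rᵀ * Eᵀ * Lᵀ := by simp [hD, Matrix.transpose_mul, Matrix.mul_assoc]
  have key : (Dᵀ * G * D).trace = (Eᵀ * G * D).trace := by
    have h6 : Dᵀ * G * D = Rᵀ * (Eᵀ * (G * (L * (E * R)))) := by
      rw [hDt, hD]
      have h7 : Rᵀ * Eᵀ * Lᵀ * G * (L * E * R) = Rᵀ * (Eᵀ * ((Lᵀ * G * L) * (E * R))) := by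
        simp only [Matrix.mul_assoc]
      rw [h7, hLGL]
      simp only [Matrix.mul_assoc]
    rw [h6, hRt]
    have h8 : (R * (Eᵀ * (G * (L * (E * R))))).trace
        = (Eᵀ * (G * (L * (E * (R * R))))).trace := by
      rw [Matrix.trace_mul_comm]
      simp only [Matrix.mul_assoc]
    rw [h8, hRR, hD]
    simp only [Matrix.mul_assoc]
  have key2 : (Dᵀ * G * E).trace = (Dᵀ * G * D).trace := by
    have h9 : (Dᵀ * G * E)ᵀ = Eᵀ * G * D := by
      simp [Matrix.transpose_mul, hGt, Matrix.mul_assoc]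
    calc (Dᵀ * G * E).trace = ((Dᵀ * G * E)ᵀ).trace := (Matrix.trace_transpose _).symm
      _ = (Eᵀ * G * D).trace := by rw [h9]
      _ = (Dᵀ * G * D).trace := key.symm
  -- nonnegativity of (E - D)ᵀ G (E - D)
  have hpsd : ((E - D)ᵀ * G * (E - D)).PosSemidef := by
    have := hG.posSemidef.conjTranspose_mul_mul_same (E - D)
    simpa [Matrix.conjTranspose_eq_transpose_of_trivial] using this
  have hnn : 0 ≤ ((E - D)ᵀ * G * (E - D)).trace := trace_psd_nonneg hpsd
  have hexp : ((E - D)ᵀ * G * (E - D)).trace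
      = (Eᵀ * G * E).trace - (Dᵀ * G * D).trace := by
    have h10 : (E - D)ᵀ * G * (E - D)
        = (Eᵀ * G * E - Eᵀ * G * D) - (Dᵀ * G * E - Dᵀ * G * D) := by
      rw [Matrix.transpose_sub]
      simp only [Matrix.sub_mul, Matrix.mul_sub]
      abel
    rw [h10]
    simp only [Matrix.trace_sub]
    rw [key2, ← key]
    ring
  have hle : (Dᵀ * G * D).trace ≤ (Eᵀ * G * E).trace := by linarith
  rw [normFG, normFG]
  exact Real.sqrt_le_sqrt hle
end

section
/- Let G be an m×m symmetric positive definite real matrix, A a p×m real matrix, B an n×q real matrix, S a p×τ₁ real matrix and P a q×τ₂ real matrix such that SᵀAG⁻¹AᵀS and PᵀBᵀBP are invertible. Define Z₁' = G⁻¹AᵀS(SᵀAG⁻¹AᵀS)⁻¹SᵀA and Z₂ = BP(PᵀBᵀBP)⁻¹PᵀBᵀ. Let X and X* be m×n real matrices and set X⁺ = X − Z₁'(X − X*)Z₂. Then ‖X⁺ − X*‖²_{F(G)} = ‖X − X*‖²_{F(G)} − ‖Z₁'(X − X*)Z₂‖²_{F(G)}. -/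
open Matrix

theorem aux_key {m n : ℕ} (G : Matrix (Fin m) (Fin m) ℝ) (hGd : IsUnit G.det)
    (hGs : Gᵀ = G)
    (K : Matrix (Fin m) (Fin m) ℝ) (hKs : Kᵀ = K) (hK2 : K * G⁻¹ * K = K)
    (Z₂ : Matrix (Fin n) (Fin n) ℝ) (hZs : Z₂ᵀ = Z₂) (hZ2 : Z₂ * Z₂ = Z₂)
    (E : Matrix (Fin m) (Fin n) ℝ) :
    Matrix.trace ((E - G⁻¹ * K * E * Z₂)ᵀ * G * (E - G⁻¹ * K * E * Z₂))
      = Matrix.trace (Eᵀ * G * E)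
        - Matrix.trace ((G⁻¹ * K * E * Z₂)ᵀ * G * (G⁻¹ * K * E * Z₂)) := by
  have hGinv : (G⁻¹)ᵀ = G⁻¹ := by rw [Matrix.transpose_nonsing_inv, hGs]
  have hGG : G⁻¹ * G = 1 := nonsing_inv_mul G hGd
  set W := G⁻¹ * K * E * Z₂ with hW
  have hWt : Wᵀ = Z₂ * Eᵀ * K * G⁻¹ := by
    simp [hW, Matrix.transpose_mul, hZs, hKs, hGinv, Matrix.mul_assoc]
  have hWGE : Wᵀ * G * E = Z₂ * Eᵀ * K * E := by
    calc Wᵀ * G * E = Z₂ * Eᵀ * K * (G⁻¹ * G) * E := by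
          rw [hWt]; simp [Matrix.mul_assoc]
      _ = Z₂ * Eᵀ * K * E := by rw [hGG]; simp [Matrix.mul_assoc]
  have hWGW : Wᵀ * G * W = Z₂ * Eᵀ * K * E * Z₂ := by
    calc Wᵀ * G * W = Z₂ * Eᵀ * K * (G⁻¹ * G) * (G⁻¹ * K * E * Z₂) := by
          rw [hWt]; simp [hW, Matrix.mul_assoc]
      _ = Z₂ * Eᵀ * (K * G⁻¹ * K) * E * Z₂ := by rw [hGG]; simp [Matrix.mul_assoc]
      _ = Z₂ * Eᵀ * K * E * Z₂ := by rw [hK2]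
  have key : Matrix.trace (Wᵀ * G * E) = Matrix.trace (Wᵀ * G * W) := by
    rw [hWGE, hWGW]
    calc Matrix.trace (Z₂ * Eᵀ * K * E) = Matrix.trace (Z₂ * Z₂ * Eᵀ * K * E) := by
          rw [hZ2]
      _ = Matrix.trace (Z₂ * Eᵀ * K * E * Z₂) := by
          rw [show Z₂ * Z₂ * Eᵀ * K * E = Z₂ * (Z₂ * Eᵀ * K * E) by
            simp [Matrix.mul_assoc], Matrix.trace_mul_comm]
  have key2 : Matrix.trace (Eᵀ * G * W) = Matrix.trace (Wᵀ * G * E) := by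
    rw [← Matrix.trace_transpose (Eᵀ * G * W)]
    simp [Matrix.transpose_mul, hGs, Matrix.mul_assoc]
  have expand : (E - W)ᵀ * G * (E - W)
      = Eᵀ * G * E - Eᵀ * G * W - Wᵀ * G * E + Wᵀ * G * W := by
    simp only [Matrix.transpose_sub, Matrix.sub_mul, Matrix.mul_sub]
    abel
  rw [expand]
  simp only [Matrix.trace_add, Matrix.trace_sub]
  linarith

/-- Pythagorean identity for the sketch-and-project update:
`‖X⁺ − X*‖²_{F(G)} = ‖X − X*‖²_{F(G)} − ‖Z₁'(X − X*)Z₂‖²_{F(G)}`,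
where `‖M‖²_{F(G)} = Tr(Mᵀ G M)`. -/
theorem stmt_4 {m n p q τ₁ τ₂ : ℕ}
    (G : Matrix (Fin m) (Fin m) ℝ) (hG : G.PosDef)
    (A : Matrix (Fin p) (Fin m) ℝ) (B : Matrix (Fin n) (Fin q) ℝ)
    (S : Matrix (Fin p) (Fin τ₁) ℝ) (P : Matrix (Fin q) (Fin τ₂) ℝ)
    (hS : IsUnit (Sᵀ * A * G⁻¹ * Aᵀ * S).det)
    (hP : IsUnit (Pᵀ * Bᵀ * B * P).det)
    (X Xs : Matrix (Fin m) (Fin n) ℝ) :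
    let Z₁' : Matrix (Fin m) (Fin m) ℝ :=
      G⁻¹ * Aᵀ * S * (Sᵀ * A * G⁻¹ * Aᵀ * S)⁻¹ * Sᵀ * A
    let Z₂ : Matrix (Fin n) (Fin n) ℝ :=
      B * P * (Pᵀ * Bᵀ * B * P)⁻¹ * Pᵀ * Bᵀ
    let Xp : Matrix (Fin m) (Fin n) ℝ := X - Z₁' * (X - Xs) * Z₂
    Matrix.trace ((Xp - Xs)ᵀ * G * (Xp - Xs))
      = Matrix.trace ((X - Xs)ᵀ * G * (X - Xs))
        - Matrix.trace ((Z₁' * (X - Xs) * Z₂)ᵀ * G * (Z₁' * (X - Xs) * Z₂)) := by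
  intro Z₁' Z₂ Xp
  have hGd : IsUnit G.det := isUnit_iff_ne_zero.mpr hG.det_pos.ne'
  have hGs : Gᵀ = G := hG.1
  have hGinv : (G⁻¹)ᵀ = G⁻¹ := by rw [Matrix.transpose_nonsing_inv, hGs]
  set M := Sᵀ * A * G⁻¹ * Aᵀ * S with hM
  set N := Pᵀ * Bᵀ * B * P with hN
  have hMs : Mᵀ = M := by
    simp [hM, Matrix.transpose_mul, hGinv, Matrix.mul_assoc]
  have hNs : Nᵀ = N := by simp [hN, Matrix.transpose_mul, Matrix.mul_assoc]
  have hMi : (M⁻¹)ᵀ = M⁻¹ := by rw [Matrix.transpose_nonsing_inv, hMs]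
  have hNi : (N⁻¹)ᵀ = N⁻¹ := by rw [Matrix.transpose_nonsing_inv, hNs]
  have hMM : M * M⁻¹ = 1 := mul_nonsing_inv M hS
  have hNN : N * N⁻¹ = 1 := mul_nonsing_inv N hP
  set K := Aᵀ * S * M⁻¹ * Sᵀ * A with hK
  have hKs : Kᵀ = K := by
    simp [hK, Matrix.transpose_mul, hMi, Matrix.mul_assoc]
  have hK2 : K * G⁻¹ * K = K := by
    calc K * G⁻¹ * K = Aᵀ * S * (M⁻¹ * (M * M⁻¹)) * Sᵀ * A := by
          simp [hK, hM, Matrix.mul_assoc]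
      _ = K := by rw [hMM, Matrix.mul_one]
  have hZ1 : Z₁' = G⁻¹ * K := by
    show G⁻¹ * Aᵀ * S * M⁻¹ * Sᵀ * A = G⁻¹ * K
    rw [hK]; simp [Matrix.mul_assoc]
  have hZs : Z₂ᵀ = Z₂ := by
    show (B * P * N⁻¹ * Pᵀ * Bᵀ)ᵀ = B * P * N⁻¹ * Pᵀ * Bᵀ
    simp [Matrix.transpose_mul, hNi, Matrix.mul_assoc]
  have hZ2' : (B * P * N⁻¹ * Pᵀ * Bᵀ) * (B * P * N⁻¹ * Pᵀ * Bᵀ)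
      = B * P * N⁻¹ * Pᵀ * Bᵀ := by
    calc (B * P * N⁻¹ * Pᵀ * Bᵀ) * (B * P * N⁻¹ * Pᵀ * Bᵀ)
        = B * P * (N⁻¹ * (N * N⁻¹)) * Pᵀ * Bᵀ := by
          simp [hN, Matrix.mul_assoc]
      _ = B * P * N⁻¹ * Pᵀ * Bᵀ := by rw [hNN, Matrix.mul_one]
  have hZ2 : Z₂ * Z₂ = Z₂ := hZ2'
  have hXp : Xp - Xs = (X - Xs) - G⁻¹ * K * (X - Xs) * Z₂ := by
    simp only [Xp, hZ1]
    abel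
  rw [hXp, hZ1]
  exact aux_key G hGd hGs K hKs hK2 Z₂ hZs hZ2 (X - Xs)
end

section
/- In the setting of a finite discrete sampling: let G be an m×m symmetric positive definite real matrix with positive definite square root G^{1/2}, A a p×m real matrix, B an n×q real matrix, and for each k in a finite index set let S_k be a p×τ₁(k) real matrix and P_k a q×τ₂(k) real matrix such that S_kᵀAG⁻¹AᵀS_k and P_kᵀBᵀBP_k are invertible, with weights p_k ≥ 0 summing to 1. Define Ẑ₁ᵏ = G^{-1/2}AᵀS_k(S_kᵀAG⁻¹AᵀS_k)⁻¹S_kᵀAG^{-1/2}, Z₂ᵏ = BP_k(P_kᵀBᵀBP_k)⁻¹P_kᵀBᵀ, and M = Σ_k p_k (Z₂ᵏ ⊗ Ẑ₁ᵏ). Then λ_min(M) ≤ (Σ_k p_k·τ₁(k)·τ₂(k))/(mn); equivalently, the convergence rate ρ = 1 − λ_min(M) satisfies ρ ≥ 1 − E[d]/(mn), where d = τ₁(k)τ₂(k) is the rank of the sampled sketch. -/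
open Matrix Kronecker

theorem trace_eq_sum_eigs {N : Type*} [Fintype N] [DecidableEq N] (M : Matrix N N ℝ)
    (hM : M.IsHermitian) : M.trace = ∑ i, hM.eigenvalues i := by
  conv_lhs => rw [hM.spectral_theorem]
  rw [Unitary.conjStarAlgAut_apply, Matrix.trace_mul_cycle,
    (Matrix.mem_unitaryGroup_iff').mp (hM.eigenvectorUnitary).2, Matrix.one_mul,
    Matrix.trace_diagonal]
  simp

/-- lower bound on the convergence rate:
`λ_min(M) ≤ (Σ_k p_k τ₁(k) τ₂(k))/(mn)` for `M = Σ_k p_k (Z₂ᵏ ⊗ Ẑ₁ᵏ)`. -/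
theorem stmt_6 {m n p q r : ℕ} (τ₁ τ₂ : Fin r → ℕ)
    (G : Matrix (Fin m) (Fin m) ℝ) (hG : G.PosDef)
    (Gh : Matrix (Fin m) (Fin m) ℝ) (hGh : Gh.PosDef) (hGhsq : Gh * Gh = G)
    (A : Matrix (Fin p) (Fin m) ℝ) (B : Matrix (Fin n) (Fin q) ℝ)
    (S : ∀ k : Fin r, Matrix (Fin p) (Fin (τ₁ k)) ℝ)
    (P : ∀ k : Fin r, Matrix (Fin q) (Fin (τ₂ k)) ℝ)
    (hS : ∀ k, IsUnit ((S k)ᵀ * A * G⁻¹ * Aᵀ * S k).det)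
    (hP : ∀ k, IsUnit ((P k)ᵀ * Bᵀ * B * P k).det)
    (w : Fin r → ℝ) (hw : ∀ k, 0 ≤ w k) (hw1 : ∑ k, w k = 1) :
    let Zh1 : Fin r → Matrix (Fin m) (Fin m) ℝ := fun k =>
      Gh⁻¹ * Aᵀ * S k * ((S k)ᵀ * A * G⁻¹ * Aᵀ * S k)⁻¹ * (S k)ᵀ * A * Gh⁻¹
    let Z2 : Fin r → Matrix (Fin n) (Fin n) ℝ := fun k =>
      B * P k * ((P k)ᵀ * Bᵀ * B * P k)⁻¹ * (P k)ᵀ * Bᵀ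
    let M : Matrix (Fin n × Fin m) (Fin n × Fin m) ℝ := ∑ k, w k • (Z2 k ⊗ₖ Zh1 k)
    ∀ hM : M.IsHermitian,
      (⨅ i, hM.eigenvalues i) ≤ (∑ k, w k * (τ₁ k : ℝ) * (τ₂ k : ℝ)) / ((m : ℝ) * n) := by
  intro Zh1 Z2 M hM
  classical
  have hGinv : G⁻¹ = Gh⁻¹ * Gh⁻¹ := by rw [← hGhsq, Matrix.mul_inv_rev]
  have htr1 : ∀ k, (Zh1 k).trace = (τ₁ k : ℝ) := by
    intro k
    have h1 : Zh1 k = (Gh⁻¹ * Aᵀ * S k) *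
        (((S k)ᵀ * A * G⁻¹ * Aᵀ * S k)⁻¹ * ((S k)ᵀ * (A * Gh⁻¹))) := by
      simp only [Zh1, Matrix.mul_assoc]
    have h2 : (((S k)ᵀ * A * G⁻¹ * Aᵀ * S k)⁻¹ * ((S k)ᵀ * (A * Gh⁻¹))) *
        (Gh⁻¹ * Aᵀ * S k)
        = ((S k)ᵀ * A * G⁻¹ * Aᵀ * S k)⁻¹ * ((S k)ᵀ * A * G⁻¹ * Aᵀ * S k) := by
      rw [hGinv]; simp only [Matrix.mul_assoc]
    rw [h1, Matrix.trace_mul_comm, h2, Matrix.nonsing_inv_mul _ (hS k), Matrix.trace_one]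
    simp
  have htr2 : ∀ k, (Z2 k).trace = (τ₂ k : ℝ) := by
    intro k
    have h1 : Z2 k = (B * P k) * (((P k)ᵀ * Bᵀ * B * P k)⁻¹ * ((P k)ᵀ * Bᵀ)) := by
      simp only [Z2, Matrix.mul_assoc]
    have h2 : (((P k)ᵀ * Bᵀ * B * P k)⁻¹ * ((P k)ᵀ * Bᵀ)) * (B * P k)
        = ((P k)ᵀ * Bᵀ * B * P k)⁻¹ * ((P k)ᵀ * Bᵀ * B * P k) := by
      simp only [Matrix.mul_assoc]
    rw [h1, Matrix.trace_mul_comm, h2, Matrix.nonsing_inv_mul _ (hP k), Matrix.trace_one]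
    simp
  have hsum : ∑ i, hM.eigenvalues i = ∑ k, w k * (τ₁ k : ℝ) * (τ₂ k : ℝ) := by
    rw [← trace_eq_sum_eigs M hM]
    simp only [M, Matrix.trace_sum, Matrix.trace_smul, Matrix.trace_kronecker]
    refine Finset.sum_congr rfl fun k _ => ?_
    rw [htr1 k, htr2 k, smul_eq_mul]
    ring
  rcases Nat.eq_zero_or_pos (m * n) with h0 | hpos
  · have hE : IsEmpty (Fin n × Fin m) := by
      rcases Nat.mul_eq_zero.mp h0 with h | h <;> subst h <;>
        simp [Fin.isEmpty'] <;> infer_instance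
    rw [iInf_of_isEmpty, Real.sInf_empty]
    have : ((m : ℝ) * n) = 0 := by exact_mod_cast h0
    rw [this, div_zero]
  · have hNpos : (0:ℝ) < (m:ℝ) * n := by
      have : (0:ℝ) < ((m * n : ℕ) : ℝ) := by exact_mod_cast hpos
      push_cast at this; linarith
    have hb := Finset.card_nsmul_le_sum (Finset.univ) hM.eigenvalues
      (⨅ j, hM.eigenvalues j)
      (fun i _ => ciInf_le (Finite.bddBelow_range _) i)
    simp only [Finset.card_univ, Fintype.card_prod, Fintype.card_fin,
      nsmul_eq_mul] at hb
    rw [hsum] at hb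
    rw [le_div_iff₀ hNpos]
    push_cast at hb
    nlinarith [hb]
end

section
/- (Global randomized Kaczmarz, one-step expected decrease.) Let A be a p×m real matrix all of whose rows are nonzero, B an n×q real matrix all of whose columns are nonzero, and X*, X m×n real matrices with AX*B = C for a p×q matrix C. For indices i ∈ {1,…,p} and j ∈ {1,…,q} set p_i = ‖A_{i,:}‖₂²/‖A‖_F², p_j = ‖B_{:,j}‖₂²/‖B‖_F², and define X⁺_{ij} = X − (A_{i,:})ᵀ(A_{i,:}XB_{:,j} − C_{ij})(B_{:,j})ᵀ/(‖A_{i,:}‖₂²‖B_{:,j}‖₂²). Then Σ_{i=1}^{p} Σ_{j=1}^{q} p_i p_j ‖X⁺_{ij} − X*‖_F² ≤ (1 − λ_min(AᵀA)λ_min(BBᵀ)/(‖A‖_F²‖B‖_F²))·‖X − X*‖_F². -/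
open Matrix

lemma grk_trace_sq {a b : ℕ} (M : Matrix (Fin a) (Fin b) ℝ) :
    Matrix.trace (Mᵀ * M) = ∑ j, ∑ i, (M i j)^2 := by
  simp [Matrix.trace, Matrix.diag, Matrix.mul_apply, sq]

lemma grk_triple_apply {p m n q : ℕ} (A : Matrix (Fin p) (Fin m) ℝ)
    (M : Matrix (Fin m) (Fin n) ℝ) (B : Matrix (Fin n) (Fin q) ℝ) (i : Fin p) (j : Fin q) :
    (A * M * B) i j = A i ⬝ᵥ M *ᵥ Bᵀ j := by
  simp only [Matrix.mul_apply, dotProduct, Matrix.mulVec, Matrix.transpose_apply,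
    Finset.sum_mul, Finset.mul_sum]
  rw [Finset.sum_comm]
  exact Finset.sum_congr rfl fun k _ => Finset.sum_congr rfl fun l _ => by ring

lemma grk_psd_trace_nonneg {k : ℕ} {P : Matrix (Fin k) (Fin k) ℝ} (hP : P.PosSemidef) :
    0 ≤ P.trace := by
  apply Finset.sum_nonneg
  intro i _
  simpa [Matrix.mulVec, dotProduct, Pi.single_apply] using hP.2 (Finsupp.single i 1)

lemma grk_sub_smul_one_psd {k : ℕ} {M : Matrix (Fin k) (Fin k) ℝ} (hM : M.IsHermitian)
    (c : ℝ) (hc : ∀ i, c ≤ hM.eigenvalues i) : (M - c • 1).PosSemidef := by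
  have hU : (hM.eigenvectorUnitary : Matrix (Fin k) (Fin k) ℝ) *
      (star (hM.eigenvectorUnitary : Matrix (Fin k) (Fin k) ℝ)) = 1 :=
    Matrix.mem_unitaryGroup_iff.mp hM.eigenvectorUnitary.2
  have h1 : M - c • 1 = (hM.eigenvectorUnitary : Matrix (Fin k) (Fin k) ℝ) *
      diagonal (fun i => hM.eigenvalues i - c) *
      (star (hM.eigenvectorUnitary : Matrix (Fin k) (Fin k) ℝ)) := by
    conv_lhs => rw [hM.spectral_theorem, ← hU]
    have : (RCLike.ofReal ∘ hM.eigenvalues : Fin k → ℝ) = hM.eigenvalues := rfl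
    rw [this, ← Matrix.mul_smul,
      show (c • (star (hM.eigenvectorUnitary : Matrix (Fin k) (Fin k) ℝ)) :
          Matrix (Fin k) (Fin k) ℝ) =
        (c • (1 : Matrix (Fin k) (Fin k) ℝ)) * star (hM.eigenvectorUnitary : Matrix (Fin k) (Fin k) ℝ)
        from by rw [Matrix.smul_mul, Matrix.one_mul],
      ← Matrix.mul_assoc, Unitary.conjStarAlgAut_apply, ← Matrix.sub_mul, ← Matrix.mul_sub, smul_one_eq_diagonal, diagonal_sub]
  rw [h1]
  have hd : (Matrix.diagonal (fun i => hM.eigenvalues i - c)).PosSemidef :=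
    Matrix.posSemidef_diagonal_iff.mpr fun i => by linarith [hc i]
  have := hd.mul_mul_conjTranspose_same (hM.eigenvectorUnitary : Matrix (Fin k) (Fin k) ℝ)
  simpa [Matrix.star_eq_conjTranspose] using this

lemma grk_trace_quad_ge {k l : ℕ} {M : Matrix (Fin k) (Fin k) ℝ} (hM : M.IsHermitian)
    (c : ℝ) (hc : ∀ i, c ≤ hM.eigenvalues i) (N : Matrix (Fin k) (Fin l) ℝ) :
    c * Matrix.trace (Nᵀ * N) ≤ Matrix.trace (Nᵀ * M * N) := by
  have hP := (grk_sub_smul_one_psd hM c hc).conjTranspose_mul_mul_same N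
  have h0 := grk_psd_trace_nonneg hP
  have hexp : Nᴴ * (M - c • 1) * N = Nᵀ * M * N - c • (Nᵀ * N) := by
    have : (Nᴴ : Matrix (Fin l) (Fin k) ℝ) = Nᵀ := by
      ext i j; simp [conjTranspose_apply]
    rw [this, Matrix.mul_sub, Matrix.mul_smul, Matrix.mul_one, Matrix.sub_mul, Matrix.smul_mul]
  rw [hexp, Matrix.trace_sub, Matrix.trace_smul] at h0
  simp only [smul_eq_mul] at h0
  linarith

lemma grk_sum_sq_expand {α β : Type*} [Fintype α] [Fintype β]
    (E : α → β → ℝ) (u : α → ℝ) (v : β → ℝ) (c : ℝ) :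
    ∑ l, ∑ k, (E k l - c * (u k * v l))^2
      = (∑ l, ∑ k, (E k l)^2) - 2*c*(∑ k, u k * ∑ l, E k l * v l)
        + c^2 * ((∑ k, u k * u k) * (∑ l, v l * v l)) := by
  have h1 : ∀ l : β, ∀ k : α, (E k l - c * (u k * v l))^2
      = (E k l)^2 - 2*c*(u k * (E k l * v l)) + c^2*((u k * u k)*(v l * v l)) := by
    intros; ring
  have hA : ∑ l : β, ∑ k : α, u k * (E k l * v l) = ∑ k, u k * ∑ l, E k l * v l := by
    rw [Finset.sum_comm]
    exact Finset.sum_congr rfl fun k _ => by rw [Finset.mul_sum]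
  have hB : ∑ l : β, ∑ k : α, (u k * u k) * (v l * v l)
      = (∑ k, u k * u k) * (∑ l, v l * v l) := by
    rw [Finset.sum_mul_sum, Finset.sum_comm]
  simp_rw [h1, Finset.sum_add_distrib, Finset.sum_sub_distrib, ← Finset.mul_sum]
  rw [hA, hB]

/-- global randomized Kaczmarz, one-step expected decrease. -/
theorem stmt_13 {m n p q : ℕ}
    (A : Matrix (Fin p) (Fin m) ℝ) (B : Matrix (Fin n) (Fin q) ℝ)
    (hA : ∀ i, A i ≠ 0) (hB : ∀ j, Bᵀ j ≠ 0)
    (Xs X : Matrix (Fin m) (Fin n) ℝ) (C : Matrix (Fin p) (Fin q) ℝ)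
    (hC : A * Xs * B = C) :
    let Xp : Fin p → Fin q → Matrix (Fin m) (Fin n) ℝ := fun i j =>
      X - ((A i ⬝ᵥ X *ᵥ Bᵀ j - C i j) / ((A i ⬝ᵥ A i) * (Bᵀ j ⬝ᵥ Bᵀ j))) •
        vecMulVec (A i) (Bᵀ j)
    ∀ (hAA : (Aᵀ * A).IsHermitian) (hBB : (B * Bᵀ).IsHermitian),
      ∑ i, ∑ j,
        ((A i ⬝ᵥ A i) / Matrix.trace (Aᵀ * A)) *
          ((Bᵀ j ⬝ᵥ Bᵀ j) / Matrix.trace (B * Bᵀ)) *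
          Matrix.trace ((Xp i j - Xs)ᵀ * (Xp i j - Xs))
      ≤ (1 - (⨅ i, hAA.eigenvalues i) * (⨅ j, hBB.eigenvalues j) /
            (Matrix.trace (Aᵀ * A) * Matrix.trace (B * Bᵀ))) *
          Matrix.trace ((X - Xs)ᵀ * (X - Xs)) := by
  intro Xp hAA hBB
  set E : Matrix (Fin m) (Fin n) ℝ := X - Xs with hE
  set S : ℝ := Matrix.trace (Eᵀ * E) with hSdef
  have hS0 : 0 ≤ S := by
    rw [hSdef, grk_trace_sq]; positivity
  set tA : ℝ := Matrix.trace (Aᵀ * A) with htAdef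
  set tB : ℝ := Matrix.trace (B * Bᵀ) with htBdef
  have htA_sq : tA = ∑ i, A i ⬝ᵥ A i := by
    rw [htAdef, grk_trace_sq, Finset.sum_comm]
    exact Finset.sum_congr rfl fun i _ => by simp [dotProduct, sq]
  have htB_sq : tB = ∑ j, Bᵀ j ⬝ᵥ Bᵀ j := by
    have : B * Bᵀ = (Bᵀ)ᵀ * Bᵀ := by rw [transpose_transpose]
    rw [htBdef, this, grk_trace_sq, Finset.sum_comm]
    exact Finset.sum_congr rfl fun j _ => by simp [dotProduct, sq]
  -- degenerate cases
  rcases Nat.eq_zero_or_pos p with hp | hp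
  · subst hp
    have h0 : tA = 0 := by rw [htA_sq]; simp
    simp only [Finset.univ_eq_empty, Finset.sum_empty, h0, zero_mul, div_zero, sub_zero, one_mul]
    exact hS0
  rcases Nat.eq_zero_or_pos q with hq | hq
  · subst hq
    have h0 : tB = 0 := by rw [htB_sq]; simp
    simp only [h0, mul_zero, div_zero, sub_zero, one_mul]
    simpa using hS0
  -- main case
  have hm : 0 < m := by
    rcases Nat.eq_zero_or_pos m with hm0 | hm0
    · exact absurd (by subst hm0; exact Subsingleton.elim _ _) (hA ⟨0, hp⟩)
    · exact hm0
  have hn : 0 < n := by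
    rcases Nat.eq_zero_or_pos n with hn0 | hn0
    · exact absurd (by subst hn0; exact Subsingleton.elim _ _) (hB ⟨0, hq⟩)
    · exact hn0
  have : Nonempty (Fin m) := ⟨⟨0, hm⟩⟩
  have : Nonempty (Fin n) := ⟨⟨0, hn⟩⟩
  have : Nonempty (Fin p) := ⟨⟨0, hp⟩⟩
  have : Nonempty (Fin q) := ⟨⟨0, hq⟩⟩
  have haA : ∀ i, 0 < A i ⬝ᵥ A i := by
    intro i
    have h0 : 0 ≤ A i ⬝ᵥ A i := Finset.sum_nonneg fun k _ => mul_self_nonneg _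
    exact lt_of_le_of_ne h0 (Ne.symm fun h => hA i (dotProduct_self_eq_zero.mp h))
  have hbB : ∀ j, 0 < Bᵀ j ⬝ᵥ Bᵀ j := by
    intro j
    have h0 : 0 ≤ Bᵀ j ⬝ᵥ Bᵀ j := Finset.sum_nonneg fun k _ => mul_self_nonneg _
    exact lt_of_le_of_ne h0 (Ne.symm fun h => hB j (dotProduct_self_eq_zero.mp h))
  have htA_pos : 0 < tA := by
    rw [htA_sq]; exact Finset.sum_pos (fun i _ => haA i) Finset.univ_nonempty
  have htB_pos : 0 < tB := by
    rw [htB_sq]; exact Finset.sum_pos (fun j _ => hbB j) Finset.univ_nonempty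
  set lamA : ℝ := ⨅ i, hAA.eigenvalues i with hlamAdef
  set lamB : ℝ := ⨅ j, hBB.eigenvalues j with hlamBdef
  have hAAt : (Aᴴ : Matrix (Fin m) (Fin p) ℝ) = Aᵀ := by ext i j; simp [conjTranspose_apply]
  have hBBt : ((Bᵀ)ᴴ : Matrix (Fin n) (Fin q) ℝ) = B := by ext i j; simp [conjTranspose_apply]
  have hpsdA : (Aᵀ * A).PosSemidef := hAAt ▸ posSemidef_conjTranspose_mul_self A
  have hpsdB : (B * Bᵀ).PosSemidef := hBBt ▸ posSemidef_conjTranspose_mul_self Bᵀ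
  have hlamA0 : 0 ≤ lamA := le_ciInf fun i => hpsdA.eigenvalues_nonneg i
  have hlamB0 : 0 ≤ lamB := le_ciInf fun j => hpsdB.eigenvalues_nonneg j
  have hlamA_le : ∀ i, lamA ≤ hAA.eigenvalues i := fun i =>
    ciInf_le (Set.Finite.bddBelow (Set.finite_range _)) i
  have hlamB_le : ∀ j, lamB ≤ hBB.eigenvalues j := fun j =>
    ciInf_le (Set.Finite.bddBelow (Set.finite_range _)) j
  set r : Fin p → Fin q → ℝ := fun i j => (A * E * B) i j with hrdef
  have hterm : ∀ i j, Matrix.trace ((Xp i j - Xs)ᵀ * (Xp i j - Xs))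
      = S - (r i j)^2 / ((A i ⬝ᵥ A i) * (Bᵀ j ⬝ᵥ Bᵀ j)) := by
    intro i j
    have hnum : A i ⬝ᵥ X *ᵥ Bᵀ j - C i j = r i j := by
      have hAEB : A * E * B = A * X * B - A * Xs * B := by
        rw [hE, Matrix.mul_sub, Matrix.sub_mul]
      rw [hrdef]
      show _ = (A * E * B) i j
      rw [hAEB, Matrix.sub_apply, grk_triple_apply, hC]
    set c : ℝ := (A i ⬝ᵥ X *ᵥ Bᵀ j - C i j) / ((A i ⬝ᵥ A i) * (Bᵀ j ⬝ᵥ Bᵀ j)) with hcdef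
    have hentry : ∀ k l, (Xp i j - Xs) k l = E k l - c * (A i k * Bᵀ j l) := by
      intro k l
      show (X - c • vecMulVec (A i) (Bᵀ j) - Xs) k l = _
      simp only [Matrix.sub_apply, Matrix.smul_apply, vecMulVec_apply, smul_eq_mul, hE]
      ring
    have hmid : ∑ k, A i k * ∑ l, E k l * Bᵀ j l = r i j := by
      rw [hrdef]
      show _ = (A * E * B) i j
      rw [grk_triple_apply]
      simp [dotProduct, Matrix.mulVec]
    have ha : ∑ k, A i k * A i k = A i ⬝ᵥ A i := rfl
    have hb : ∑ l, Bᵀ j l * Bᵀ j l = Bᵀ j ⬝ᵥ Bᵀ j := rfl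
    rw [grk_trace_sq]
    calc ∑ l, ∑ k, ((Xp i j - Xs) k l)^2
        = ∑ l, ∑ k, (E k l - c * (A i k * Bᵀ j l))^2 :=
          Finset.sum_congr rfl fun l _ => Finset.sum_congr rfl fun k _ => by rw [hentry]
      _ = (∑ l, ∑ k, (E k l)^2) - 2*c*(∑ k, A i k * ∑ l, E k l * Bᵀ j l)
            + c^2 * ((∑ k, A i k * A i k) * (∑ l, Bᵀ j l * Bᵀ j l)) :=
          grk_sum_sq_expand (fun k l => E k l) (A i) (Bᵀ j) c
      _ = S - 2*c*(r i j) + c^2*((A i ⬝ᵥ A i) * (Bᵀ j ⬝ᵥ Bᵀ j)) := by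
          rw [hmid, ha, hb, ← grk_trace_sq, ← hSdef]
      _ = S - (r i j)^2 / ((A i ⬝ᵥ A i) * (Bᵀ j ⬝ᵥ Bᵀ j)) := by
          rw [hcdef, hnum]
          have h1 := (haA i).ne'
          have h2 := (hbB j).ne'
          field_simp
          ring
  have hterm2 : ∀ i j, ((A i ⬝ᵥ A i) / tA) * ((Bᵀ j ⬝ᵥ Bᵀ j) / tB) *
      (S - (r i j)^2 / ((A i ⬝ᵥ A i) * (Bᵀ j ⬝ᵥ Bᵀ j)))
      = ((A i ⬝ᵥ A i) * (Bᵀ j ⬝ᵥ Bᵀ j)) * (S/(tA*tB)) - (r i j)^2 * (1/(tA*tB)) := by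
    intro i j
    have h1 := (haA i).ne'
    have h2 := (hbB j).ne'
    have h3 := htA_pos.ne'
    have h4 := htB_pos.ne'
    field_simp
  have hLHS : ∑ i, ∑ j, ((A i ⬝ᵥ A i) / tA) * ((Bᵀ j ⬝ᵥ Bᵀ j) / tB) *
      Matrix.trace ((Xp i j - Xs)ᵀ * (Xp i j - Xs))
      = S - (∑ i, ∑ j, (r i j)^2) / (tA * tB) := by
    calc ∑ i, ∑ j, ((A i ⬝ᵥ A i) / tA) * ((Bᵀ j ⬝ᵥ Bᵀ j) / tB) *
        Matrix.trace ((Xp i j - Xs)ᵀ * (Xp i j - Xs))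
        = ∑ i, ∑ j, (((A i ⬝ᵥ A i) * (Bᵀ j ⬝ᵥ Bᵀ j)) * (S/(tA*tB))
            - (r i j)^2 * (1/(tA*tB))) :=
          Finset.sum_congr rfl fun i _ => Finset.sum_congr rfl fun j _ => by
            rw [hterm i j, hterm2 i j]
      _ = (∑ i, ∑ j, (A i ⬝ᵥ A i) * (Bᵀ j ⬝ᵥ Bᵀ j)) * (S/(tA*tB))
            - (∑ i, ∑ j, (r i j)^2) * (1/(tA*tB)) := by
          simp_rw [Finset.sum_sub_distrib, ← Finset.sum_mul]
      _ = S - (∑ i, ∑ j, (r i j)^2) / (tA * tB) := by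
          rw [show (∑ i, ∑ j, (A i ⬝ᵥ A i) * (Bᵀ j ⬝ᵥ Bᵀ j)) = tA * tB from by
            rw [htA_sq, htB_sq, Finset.sum_mul_sum]]
          rw [mul_div_cancel₀ _ (mul_pos htA_pos htB_pos).ne']
          ring
  have h1 : lamA * Matrix.trace ((E*B)ᵀ * (E*B))
      ≤ Matrix.trace ((E*B)ᵀ * (Aᵀ*A) * (E*B)) := grk_trace_quad_ge hAA lamA hlamA_le (E*B)
  have heq1 : (E*B)ᵀ * (Aᵀ*A) * (E*B) = (A*E*B)ᵀ * (A*E*B) := by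
    simp only [transpose_mul, Matrix.mul_assoc]
  have h2 : lamB * Matrix.trace (Eᵀᵀ * Eᵀ)
      ≤ Matrix.trace (Eᵀᵀ * (B*Bᵀ) * Eᵀ) := grk_trace_quad_ge hBB lamB hlamB_le Eᵀ
  have heq2a : Matrix.trace (Eᵀᵀ * Eᵀ) = S := by
    rw [transpose_transpose, Matrix.trace_mul_comm, hSdef]
  have heq2b : Matrix.trace ((E*B)ᵀ * (E*B)) = Matrix.trace (Eᵀᵀ * (B*Bᵀ) * Eᵀ) := by
    rw [transpose_transpose, transpose_mul, Matrix.trace_mul_comm]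
    simp only [Matrix.mul_assoc]
  rw [heq2a, ← heq2b] at h2
  have hR : Matrix.trace ((A*E*B)ᵀ * (A*E*B)) = ∑ i, ∑ j, (r i j)^2 := by
    rw [grk_trace_sq, Finset.sum_comm]
  have key : lamA * lamB * S ≤ ∑ i, ∑ j, (r i j)^2 := by
    calc lamA * lamB * S = lamA * (lamB * S) := by ring
      _ ≤ lamA * Matrix.trace ((E*B)ᵀ * (E*B)) := mul_le_mul_of_nonneg_left h2 hlamA0
      _ ≤ Matrix.trace ((E*B)ᵀ * (Aᵀ*A) * (E*B)) := h1
      _ = ∑ i, ∑ j, (r i j)^2 := by rw [heq1, hR]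
  rw [hLHS]
  have hd : (0:ℝ) < tA * tB := mul_pos htA_pos htB_pos
  have hdiv : lamA * lamB * S / (tA * tB) ≤ (∑ i, ∑ j, (r i j)^2) / (tA * tB) := by
    gcongr
  calc S - (∑ i, ∑ j, (r i j)^2) / (tA * tB)
      ≤ S - lamA * lamB * S / (tA * tB) := by linarith
    _ = (1 - lamA * lamB / (tA * tB)) * S := by ring
end

section
/- (Randomized Kaczmarz for A, one-step expected decrease.) Let A be a p×m real matrix all of whose rows are nonzero, and let B be an n×q real matrix with full row rank (so BBᵀ is invertible and B† = Bᵀ(BBᵀ)⁻¹). Let X*, X be m×n real matrices and set C = AX*B. For i ∈ {1,…,p} set p_i = ‖A_{i,:}‖₂²/‖A‖_F² and X⁺_i = X + (A_{i,:})ᵀ(C_{i,:} − A_{i,:}XB)B†/‖A_{i,:}‖₂². Then Σ_{i=1}^{p} p_i ‖X⁺_i − X*‖_F² ≤ (1 − λ_min(AᵀA)/‖A‖_F²)·‖X − X*‖_F². -/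
open Matrix

lemma isUnit_of_rank_eq_card {n : ℕ} (M : Matrix (Fin n) (Fin n) ℝ) (h : M.rank = n) :
    IsUnit M := by
  rw [← Matrix.mulVec_surjective_iff_isUnit]
  have hr : LinearMap.range M.mulVecLin = ⊤ := by
    apply Submodule.eq_top_of_finrank_eq
    rw [Matrix.rank] at h
    simp [h]
  intro y
  obtain ⟨x, hx⟩ := LinearMap.range_eq_top.mp hr y
  exact ⟨x, hx⟩

lemma trace_transpose_mul_self {m n : ℕ} (M : Matrix (Fin m) (Fin n) ℝ) :
    Matrix.trace (Mᵀ * M) = ∑ j, ∑ k, M j k * M j k := by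
  simp only [Matrix.trace, Matrix.diag, Matrix.mul_apply, Matrix.transpose_apply]
  exact Finset.sum_comm

lemma rayleigh {N : Type*} [Fintype N] [DecidableEq N] (M : Matrix N N ℝ)
    (hM : M.IsHermitian) (lb : ℝ) (hlb : ∀ k, lb ≤ hM.eigenvalues k) (x : N → ℝ) :
    lb * (x ⬝ᵥ x) ≤ x ⬝ᵥ (M *ᵥ x) := by
  set U : Matrix N N ℝ := (hM.eigenvectorUnitary : Matrix N N ℝ) with hUdef
  have hstar : star U = Uᵀ := by
    rw [Matrix.star_eq_conjTranspose, Matrix.conjTranspose_eq_transpose_of_trivial]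
  have hU1 : U * Uᵀ = 1 := by
    rw [← hstar]; exact (Matrix.mem_unitaryGroup_iff).mp hM.eigenvectorUnitary.2
  set y : N → ℝ := x ᵥ* U with hy
  have hdiag : M = U * Matrix.diagonal hM.eigenvalues * Uᵀ := by
    have := hM.spectral_theorem
    simp only [Unitary.conjStarAlgAut_apply, Unitary.coe_star] at this
    rw [← hUdef, hstar] at this
    simpa using this
  have hxy : x ⬝ᵥ (M *ᵥ x) = y ⬝ᵥ (Matrix.diagonal hM.eigenvalues *ᵥ y) := by
    conv_lhs => rw [hdiag]
    rw [← Matrix.mulVec_mulVec, ← Matrix.mulVec_mulVec, Matrix.dotProduct_mulVec, ← hy,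
      Matrix.mulVec_transpose, ← hy]
  have hxx : x ⬝ᵥ x = y ⬝ᵥ y := by
    conv_rhs => rw [hy]
    rw [← Matrix.dotProduct_mulVec, ← Matrix.mulVec_transpose, Matrix.mulVec_mulVec, hU1,
      Matrix.one_mulVec]
  rw [hxy, hxx]
  have hd : y ⬝ᵥ (Matrix.diagonal hM.eigenvalues *ᵥ y) = ∑ k, hM.eigenvalues k * (y k * y k) := by
    simp only [dotProduct, Matrix.mulVec_diagonal]
    exact Finset.sum_congr rfl fun k _ => by ring
  rw [hd, dotProduct, Finset.mul_sum]
  exact Finset.sum_le_sum fun k _ =>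
    mul_le_mul_of_nonneg_right (hlb k) (mul_self_nonneg _)

/-- randomized Kaczmarz for `A` (RK-A), one-step expected decrease. -/
theorem stmt_14 {m n p q : ℕ}
    (A : Matrix (Fin p) (Fin m) ℝ) (B : Matrix (Fin n) (Fin q) ℝ)
    (hA : ∀ i, A i ≠ 0) (hB : B.rank = n)
    (Xs X : Matrix (Fin m) (Fin n) ℝ) :
    let C : Matrix (Fin p) (Fin q) ℝ := A * Xs * B
    let Bd : Matrix (Fin q) (Fin n) ℝ := Bᵀ * (B * Bᵀ)⁻¹
    let Xp : Fin p → Matrix (Fin m) (Fin n) ℝ := fun i =>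
      X + (1 / (A i ⬝ᵥ A i)) • vecMulVec (A i) ((C i - (A i ᵥ* X) ᵥ* B) ᵥ* Bd)
    ∀ (hAA : (Aᵀ * A).IsHermitian),
      ∑ i, ((A i ⬝ᵥ A i) / Matrix.trace (Aᵀ * A)) *
          Matrix.trace ((Xp i - Xs)ᵀ * (Xp i - Xs))
      ≤ (1 - (⨅ k, hAA.eigenvalues k) / Matrix.trace (Aᵀ * A)) *
          Matrix.trace ((X - Xs)ᵀ * (X - Xs)) := by
  intro C Bd Xp hAA
  set E : Matrix (Fin m) (Fin n) ℝ := X - Xs with hE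
  set F : ℝ := ∑ j, ∑ k, E j k * E j k with hFdef
  have hF0 : 0 ≤ F := Finset.sum_nonneg fun j _ => Finset.sum_nonneg fun k _ =>
    mul_self_nonneg _
  have hEtr : Matrix.trace ((X - Xs)ᵀ * (X - Xs)) = F := trace_transpose_mul_self E
  have hT : Matrix.trace (Aᵀ * A) = ∑ i, A i ⬝ᵥ A i := by
    simp only [Matrix.trace, Matrix.diag, Matrix.mul_apply, Matrix.transpose_apply,
      dotProduct]
    exact Finset.sum_comm
  rcases Nat.eq_zero_or_pos p with hp | hp
  · subst hp
    have hT0 : Matrix.trace (Aᵀ * A) = 0 := by rw [hT]; simp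
    rw [hT0, div_zero, sub_zero, one_mul, hEtr]
    simpa using hF0
  -- main case
  have hip : Nonempty (Fin p) := ⟨⟨0, hp⟩⟩
  have him : Nonempty (Fin m) := by
    rcases Nat.eq_zero_or_pos m with hm0 | hm0
    · subst hm0
      exact absurd (funext fun j => j.elim0 : A ⟨0, hp⟩ = 0) (hA ⟨0, hp⟩)
    · exact ⟨⟨0, hm0⟩⟩
  have hApos : ∀ i, 0 < A i ⬝ᵥ A i := fun i => by
    rcases lt_or_eq_of_le (Finset.sum_nonneg fun j _ => mul_self_nonneg (A i j)) with h | h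
    · exact h
    · exact absurd (dotProduct_self_eq_zero.mp h.symm) (hA i)
  have hTpos : 0 < Matrix.trace (Aᵀ * A) := by
    rw [hT]; exact Finset.sum_pos (fun i _ => hApos i) Finset.univ_nonempty
  set T : ℝ := Matrix.trace (Aᵀ * A) with hTdef
  set lam : ℝ := ⨅ k, hAA.eigenvalues k with hlam
  have hlb : ∀ k, lam ≤ hAA.eigenvalues k := fun k =>
    ciInf_le (Finite.bddBelow_range _) k
  -- pseudoinverse fact
  have hBBT : IsUnit (B * Bᵀ) :=
    isUnit_of_rank_eq_card _ (by rw [Matrix.rank_self_mul_transpose, hB])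
  have hBd1 : B * Bd = 1 := by
    show B * (Bᵀ * (B * Bᵀ)⁻¹) = 1
    rw [← Matrix.mul_assoc, Matrix.mul_nonsing_inv _ ((Matrix.isUnit_iff_isUnit_det _).mp hBBT)]
  set w : Fin p → Fin n → ℝ := fun i => A i ᵥ* E with hw
  -- rewrite residual row
  have hres : ∀ i, (C i - (A i ᵥ* X) ᵥ* B) ᵥ* Bd = -(w i) := by
    intro i
    have hCi : C i = (A i ᵥ* Xs) ᵥ* B := by
      funext k
      show (A * Xs * B) i k = _
      simp [Matrix.mul_apply, Matrix.vecMul, dotProduct, Finset.sum_mul]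
    have h2 : C i - (A i ᵥ* X) ᵥ* B = (-(w i)) ᵥ* B := by
      rw [hCi, ← Matrix.sub_vecMul]
      rw [hw]
      simp only [hE]
      rw [Matrix.vecMul_sub]
      abel_nf
    rw [h2, Matrix.vecMul_vecMul, hBd1, Matrix.vecMul_one]
  have hentry : ∀ i j k, (Xp i - Xs) j k
      = E j k - (1 / (A i ⬝ᵥ A i)) * (A i j * w i k) := by
    intro i j k
    show (X + (1 / (A i ⬝ᵥ A i)) • vecMulVec (A i) ((C i - (A i ᵥ* X) ᵥ* B) ᵥ* Bd) - Xs) j k = _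
    rw [hres i]
    simp only [Matrix.sub_apply, Matrix.add_apply, Matrix.smul_apply, Matrix.vecMulVec_apply,
      Pi.neg_apply, hE, smul_eq_mul]
    ring
  have hwk : ∀ i k, w i k = ∑ j, A i j * E j k := by
    intro i k
    simp [hw, Matrix.vecMul, dotProduct]
  -- per-index trace
  have htr : ∀ i, Matrix.trace ((Xp i - Xs)ᵀ * (Xp i - Xs))
      = F - (w i ⬝ᵥ w i) / (A i ⬝ᵥ A i) := by
    intro i
    rw [trace_transpose_mul_self]
    have hexp : ∀ j k, (Xp i - Xs) j k * (Xp i - Xs) j k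
        = E j k * E j k
          - (2 * (1 / (A i ⬝ᵥ A i))) * ((A i j * E j k) * w i k)
          + ((1 / (A i ⬝ᵥ A i)) * (1 / (A i ⬝ᵥ A i))) * ((A i j * A i j) * (w i k * w i k)) := by
      intro j k
      rw [hentry i j k]
      ring
    have hsum : ∑ j, ∑ k, (Xp i - Xs) j k * (Xp i - Xs) j k
        = F - (2 * (1 / (A i ⬝ᵥ A i))) * (∑ j, ∑ k, (A i j * E j k) * w i k)
          + ((1 / (A i ⬝ᵥ A i)) * (1 / (A i ⬝ᵥ A i)))
            * (∑ j, ∑ k, (A i j * A i j) * (w i k * w i k)) := by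
      rw [hFdef]
      rw [Finset.sum_congr rfl fun j _ => Finset.sum_congr rfl fun k _ => hexp j k]
      simp only [Finset.sum_add_distrib, Finset.sum_sub_distrib, ← Finset.mul_sum]
    have hS2 : ∑ j, ∑ k, (A i j * E j k) * w i k = w i ⬝ᵥ w i := by
      rw [Finset.sum_comm, dotProduct]
      refine Finset.sum_congr rfl fun k _ => ?_
      rw [← Finset.sum_mul, ← hwk i k]
    have hS3 : ∑ j, ∑ k, (A i j * A i j) * (w i k * w i k)
        = (A i ⬝ᵥ A i) * (w i ⬝ᵥ w i) := by
      rw [dotProduct, dotProduct, Finset.sum_mul_sum]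
    rw [hsum, hS2, hS3]
    have ha := (hApos i).ne'
    field_simp
    ring
  -- total sum
  have hLHS : ∑ i, ((A i ⬝ᵥ A i) / T) * Matrix.trace ((Xp i - Xs)ᵀ * (Xp i - Xs))
      = F - (∑ i, w i ⬝ᵥ w i) / T := by
    rw [Finset.sum_congr rfl fun i _ => by rw [htr i]]
    have hterm : ∀ i : Fin p, ((A i ⬝ᵥ A i) / T) * (F - (w i ⬝ᵥ w i) / (A i ⬝ᵥ A i))
        = (A i ⬝ᵥ A i) * F / T - (w i ⬝ᵥ w i) / T := by
      intro i
      have ha := (hApos i).ne'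
      have hT' := hTpos.ne'
      field_simp
    rw [Finset.sum_congr rfl fun i _ => hterm i]
    rw [Finset.sum_sub_distrib, ← Finset.sum_div, ← Finset.sum_div, ← Finset.sum_mul, ← hT, mul_comm, mul_div_assoc, div_self hTpos.ne', mul_one]
  -- lower bound on S
  have hSlb : lam * F ≤ ∑ i, w i ⬝ᵥ w i := by
    have hcolS : ∑ i, w i ⬝ᵥ w i
        = ∑ k, (fun j => E j k) ⬝ᵥ ((Aᵀ * A) *ᵥ fun j => E j k) := by
      have hinner : ∀ k, (fun j => E j k) ⬝ᵥ ((Aᵀ * A) *ᵥ fun j => E j k)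
          = ∑ i, (∑ j, A i j * E j k) * (∑ j, A i j * E j k) := by
        intro k
        rw [← Matrix.mulVec_mulVec, Matrix.dotProduct_mulVec, Matrix.vecMul_transpose]
        simp only [dotProduct, Matrix.mulVec, dotProduct]
      rw [Finset.sum_congr rfl fun k _ => hinner k, Finset.sum_comm]
      refine Finset.sum_congr rfl fun i _ => ?_
      rw [dotProduct]
      exact Finset.sum_congr rfl fun k _ => by rw [hwk i k]
    have hFcol : F = ∑ k, (fun j => E j k) ⬝ᵥ (fun j => E j k) := by
      rw [hFdef, Finset.sum_comm]
      exact Finset.sum_congr rfl fun k _ => rfl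
    rw [hcolS, hFcol, Finset.mul_sum]
    exact Finset.sum_le_sum fun k _ => rayleigh _ hAA lam hlb _
  rw [hEtr, hLHS]
  have hdivle : lam * F / T ≤ (∑ i, w i ⬝ᵥ w i) / T := by gcongr
  have : (1 - lam / T) * F = F - lam * F / T := by ring
  rw [this]
  linarith
end

section
/- (Randomized Kaczmarz for B, one-step expected decrease.) Let A be a p×m real matrix with full column rank (so AᵀA is invertible and A† = (AᵀA)⁻¹Aᵀ), and let B be an n×q real matrix all of whose columns are nonzero. Let X*, X be m×n real matrices and set C = AX*B. For j ∈ {1,…,q} set p_j = ‖B_{:,j}‖₂²/‖B‖_F² and X⁺_j = X + A†(C_{:,j} − AXB_{:,j})(B_{:,j})ᵀ/‖B_{:,j}‖₂². Then Σ_{j=1}^{q} p_j ‖X⁺_j − X*‖_F² ≤ (1 − λ_min(BBᵀ)/‖B‖_F²)·‖X − X*‖_F². -/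
open Matrix

lemma aux_trace_nonneg {a b : ℕ} (H : Matrix (Fin a) (Fin b) ℝ) :
    0 ≤ Matrix.trace (H * Hᵀ) := by
  simp only [Matrix.trace, Matrix.diag, mul_apply, transpose_apply]
  exact Finset.sum_nonneg fun i _ => Finset.sum_nonneg fun j _ => mul_self_nonneg _

lemma aux_trace_vbb {k l : ℕ} (M : Matrix (Fin k) (Fin l) ℝ) (u : Fin l → ℝ) (v : Fin k → ℝ) :
    Matrix.trace (M * vecMulVec u v) = v ⬝ᵥ (M *ᵥ u) := by
  simp only [Matrix.trace, Matrix.diag, mul_apply, vecMulVec_apply, dotProduct, mulVec,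
    Finset.mul_sum]
  exact Finset.sum_congr rfl fun i _ => Finset.sum_congr rfl fun j _ => by ring

lemma aux_mul_vbb {k l : ℕ} (E : Matrix (Fin k) (Fin l) ℝ) (u : Fin l → ℝ) (v : Fin l → ℝ) :
    vecMulVec (E *ᵥ u) v = E * vecMulVec u v := by
  ext i j
  simp only [vecMulVec_apply, mul_apply, mulVec, dotProduct, Finset.sum_mul]
  exact Finset.sum_congr rfl fun x _ => by ring

lemma aux_vbb_mul_vbb {k : ℕ} (u v u' v' : Fin k → ℝ) :
    vecMulVec u v * vecMulVec u' v' = (v ⬝ᵥ u') • vecMulVec u v' := by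
  ext i j
  simp only [mul_apply, vecMulVec_apply, Matrix.smul_apply, dotProduct, smul_eq_mul, Finset.sum_mul,
    Finset.mul_sum]
  exact Finset.sum_congr rfl fun x _ => by ring

lemma aux_vbb_transpose {k l : ℕ} (u : Fin k → ℝ) (v : Fin l → ℝ) :
    (vecMulVec u v)ᵀ = vecMulVec v u := by
  ext i j; simp [vecMulVec_apply, mul_comm]

lemma aux_BBt {n q : ℕ} (B : Matrix (Fin n) (Fin q) ℝ) :
    B * Bᵀ = ∑ j, vecMulVec (Bᵀ j) (Bᵀ j) := by
  ext i k
  simp [mul_apply, vecMulVec_apply, Matrix.sum_apply, mul_comm]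

lemma aux_trace_F {a b' : ℕ} (E : Matrix (Fin a) (Fin b') ℝ) (u : Fin b' → ℝ)
    (hc : u ⬝ᵥ u ≠ 0) :
    Matrix.trace ((E - (1 / (u ⬝ᵥ u)) • (E * vecMulVec u u))ᵀ
        * (E - (1 / (u ⬝ᵥ u)) • (E * vecMulVec u u)))
      = Matrix.trace (Eᵀ * E) - ((E *ᵥ u) ⬝ᵥ (E *ᵥ u)) / (u ⬝ᵥ u) := by
  set G : Matrix (Fin a) (Fin b') ℝ := E * vecMulVec u u with hG
  set r : ℝ := 1 / (u ⬝ᵥ u) with hr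
  have e1 : Matrix.trace (Eᵀ * G) = (E *ᵥ u) ⬝ᵥ (E *ᵥ u) := by
    rw [hG, ← Matrix.mul_assoc, aux_trace_vbb, ← Matrix.mulVec_mulVec,
      Matrix.dotProduct_mulVec, Matrix.vecMul_transpose]
  have e2 : Matrix.trace (Gᵀ * E) = (E *ᵥ u) ⬝ᵥ (E *ᵥ u) := by
    rw [← Matrix.trace_transpose, Matrix.transpose_mul, Matrix.transpose_transpose]
    exact e1
  have e3 : Matrix.trace (Gᵀ * G) = (u ⬝ᵥ u) * ((E *ᵥ u) ⬝ᵥ (E *ᵥ u)) := by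
    rw [Matrix.trace_mul_comm]
    have hGt : Gᵀ = vecMulVec u u * Eᵀ := by
      rw [hG, Matrix.transpose_mul, aux_vbb_transpose]
    rw [hGt, hG, Matrix.mul_assoc, ← Matrix.mul_assoc (vecMulVec u u), aux_vbb_mul_vbb,
      Matrix.smul_mul, Matrix.mul_smul, Matrix.trace_smul, ← Matrix.mul_assoc,
      Matrix.trace_mul_comm, ← Matrix.mul_assoc, aux_trace_vbb, ← Matrix.mulVec_mulVec,
      Matrix.dotProduct_mulVec, Matrix.vecMul_transpose, smul_eq_mul]
  have expand : (E - r • G)ᵀ * (E - r • G)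
      = Eᵀ * E - r • (Eᵀ * G) - r • (Gᵀ * E) + (r * r) • (Gᵀ * G) := by
    simp only [Matrix.transpose_sub, Matrix.transpose_smul, Matrix.sub_mul, Matrix.mul_sub,
      Matrix.smul_mul, Matrix.mul_smul, smul_smul, smul_sub]
    abel
  rw [expand, Matrix.trace_add, Matrix.trace_sub, Matrix.trace_sub, Matrix.trace_smul,
    Matrix.trace_smul, Matrix.trace_smul, e1, e2, e3, hr]
  simp only [smul_eq_mul]
  field_simp
  ring

lemma aux_psd_sub {ν : ℕ} {M : Matrix (Fin ν) (Fin ν) ℝ} (hM : M.IsHermitian) :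
    (M - (⨅ k, hM.eigenvalues k) • 1).PosSemidef := by
  set μ := ⨅ k, hM.eigenvalues k with hμ
  set U : Matrix (Fin ν) (Fin ν) ℝ := (hM.eigenvectorUnitary : Matrix (Fin ν) (Fin ν) ℝ) with hU
  have hUU : U * Uᴴ = 1 := (Matrix.mem_unitaryGroup_iff).mp hM.eigenvectorUnitary.2
  have hle : ∀ k, μ ≤ hM.eigenvalues k := fun k => ciInf_le (Finite.bddBelow_range _) k
  have hd : (Matrix.diagonal (fun k => hM.eigenvalues k - μ)).PosSemidef :=
    Matrix.posSemidef_diagonal_iff.mpr fun k => sub_nonneg.mpr (hle k)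
  have key : M - μ • 1 = U * Matrix.diagonal (fun k => hM.eigenvalues k - μ) * Uᴴ := by
    have hst : M = U * Matrix.diagonal (fun k => hM.eigenvalues k) * Uᴴ := by
      have := hM.spectral_theorem
      simpa [Function.comp, Matrix.star_eq_conjTranspose] using this
    have hdiag : Matrix.diagonal (fun k => hM.eigenvalues k - μ)
        = Matrix.diagonal (fun k => hM.eigenvalues k) - μ • 1 := by
      ext i j
      by_cases h : i = j <;> simp [Matrix.diagonal_apply, h, Matrix.one_apply]
    rw [hdiag, Matrix.mul_sub, Matrix.sub_mul, ← hst]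
    congr 1
    rw [Matrix.mul_smul, mul_one, Matrix.smul_mul, hUU]
  rw [key]
  exact hd.mul_mul_conjTranspose_same U

lemma aux_trace_mul_psd_nonneg {a : ℕ} {P N : Matrix (Fin a) (Fin a) ℝ}
    (hP : P.PosSemidef) (hN : N.PosSemidef) : 0 ≤ Matrix.trace (P * N) := by
  open scoped MatrixOrder in
  obtain ⟨G, rfl⟩ := CStarAlgebra.nonneg_iff_eq_star_mul_self.mp hP.nonneg
  open scoped MatrixOrder in
  obtain ⟨W, rfl⟩ := CStarAlgebra.nonneg_iff_eq_star_mul_self.mp hN.nonneg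
  simp only [Matrix.star_eq_conjTranspose, Matrix.conjTranspose_eq_transpose_of_trivial]
  have h1 : Gᵀ * G * (Wᵀ * W) = (Gᵀ * G * Wᵀ) * W := by noncomm_ring
  rw [h1, Matrix.trace_mul_comm]
  have h2 : W * (Gᵀ * G * Wᵀ) = (W * Gᵀ) * (W * Gᵀ)ᵀ := by
    rw [Matrix.transpose_mul, Matrix.transpose_transpose]; noncomm_ring
  rw [h2]
  exact aux_trace_nonneg _

lemma aux_pinv_mul {p m : ℕ} (A : Matrix (Fin p) (Fin m) ℝ) (hA : A.rank = m) :
    ((Aᵀ * A)⁻¹ * Aᵀ) * A = 1 := by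
  have hr : (Aᵀ * A).rank = m := by
    have := A.rank_conjTranspose_mul_self
    rwa [Matrix.conjTranspose_eq_transpose_of_trivial, hA] at this
  have hsurj : Function.Surjective (Aᵀ * A).mulVecLin := by
    rw [← LinearMap.range_eq_top]
    apply Submodule.eq_top_of_finrank_eq
    rw [← Matrix.rank, hr]
    simp [Module.finrank_pi]
  have hu : IsUnit (Aᵀ * A) := by
    rw [← Matrix.mulVec_surjective_iff_isUnit]
    exact hsurj
  rw [Matrix.mul_assoc, Matrix.nonsing_inv_mul _ ((Matrix.isUnit_iff_isUnit_det _).mp hu)]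

/-- randomized Kaczmarz for `B` (RK-B), one-step expected decrease. -/
theorem stmt_15 {m n p q : ℕ}
    (A : Matrix (Fin p) (Fin m) ℝ) (B : Matrix (Fin n) (Fin q) ℝ)
    (hA : A.rank = m) (hB : ∀ j, Bᵀ j ≠ 0)
    (Xs X : Matrix (Fin m) (Fin n) ℝ) :
    let C : Matrix (Fin p) (Fin q) ℝ := A * Xs * B
    let Ad : Matrix (Fin m) (Fin p) ℝ := (Aᵀ * A)⁻¹ * Aᵀ
    let Xp : Fin q → Matrix (Fin m) (Fin n) ℝ := fun j =>
      X + (1 / (Bᵀ j ⬝ᵥ Bᵀ j)) • vecMulVec (Ad *ᵥ (Cᵀ j - (A * X) *ᵥ Bᵀ j)) (Bᵀ j)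
    ∀ (hBB : (B * Bᵀ).IsHermitian),
      ∑ j, ((Bᵀ j ⬝ᵥ Bᵀ j) / Matrix.trace (B * Bᵀ)) *
          Matrix.trace ((Xp j - Xs)ᵀ * (Xp j - Xs))
      ≤ (1 - (⨅ k, hBB.eigenvalues k) / Matrix.trace (B * Bᵀ)) *
          Matrix.trace ((X - Xs)ᵀ * (X - Xs)) := by
  intro C Ad Xp hBB
  classical
  have hAdA : Ad * A = 1 := aux_pinv_mul A hA
  set E : Matrix (Fin m) (Fin n) ℝ := X - Xs with hE
  set t : ℝ := Matrix.trace (Eᵀ * E) with ht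
  set T : ℝ := Matrix.trace (B * Bᵀ) with hT
  set μ : ℝ := ⨅ k, hBB.eigenvalues k with hμ
  have ht0 : 0 ≤ t := by
    have := aux_trace_nonneg Eᵀ
    rwa [Matrix.transpose_transpose] at this
  have hc0 : ∀ j, 0 < Bᵀ j ⬝ᵥ Bᵀ j := by
    intro j
    have hne : Bᵀ j ⬝ᵥ Bᵀ j ≠ 0 := fun h => hB j (dotProduct_self_eq_zero.mp h)
    have hnn : 0 ≤ Bᵀ j ⬝ᵥ Bᵀ j := Finset.sum_nonneg fun i _ => mul_self_nonneg _
    exact lt_of_le_of_ne hnn (Ne.symm hne)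
  -- key identity for the iterate
  have hXp : ∀ j, Xp j - Xs = E - (1 / (Bᵀ j ⬝ᵥ Bᵀ j)) • (E * vecMulVec (Bᵀ j) (Bᵀ j)) := by
    intro j
    have hC : Cᵀ j = (A * Xs) *ᵥ Bᵀ j := by
      ext i
      simp [C, Matrix.mul_apply, Matrix.mulVec, dotProduct, Matrix.transpose_apply]
    have hvec : Ad *ᵥ (Cᵀ j - (A * X) *ᵥ Bᵀ j) = (-E) *ᵥ Bᵀ j := by
      rw [hC, ← Matrix.sub_mulVec, ← Matrix.mul_sub, Matrix.mulVec_mulVec, ← Matrix.mul_assoc,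
        hAdA, Matrix.one_mul]
      rw [hE]
      abel_nf
    show X + (1 / (Bᵀ j ⬝ᵥ Bᵀ j)) • vecMulVec (Ad *ᵥ (Cᵀ j - (A * X) *ᵥ Bᵀ j)) (Bᵀ j) - Xs
        = E - (1 / (Bᵀ j ⬝ᵥ Bᵀ j)) • (E * vecMulVec (Bᵀ j) (Bᵀ j))
    rw [hvec, aux_mul_vbb, Matrix.neg_mul, smul_neg, hE]
    abel
  -- trace formula for each j
  have htr : ∀ j, Matrix.trace ((Xp j - Xs)ᵀ * (Xp j - Xs))
      = t - ((E *ᵥ Bᵀ j) ⬝ᵥ (E *ᵥ Bᵀ j)) / (Bᵀ j ⬝ᵥ Bᵀ j) := by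
    intro j
    rw [hXp j, aux_trace_F E (Bᵀ j) (hc0 j).ne', ht]
  -- sum of squared column norms equals T
  have hTsum : T = ∑ j, Bᵀ j ⬝ᵥ Bᵀ j := by
    rw [hT]
    simp only [Matrix.trace, Matrix.diag, Matrix.mul_apply, Matrix.transpose_apply,
      dotProduct]
    rw [Finset.sum_comm]
  -- expected squared residual and the eigenvalue bound
  have hS : ∑ j, (E *ᵥ Bᵀ j) ⬝ᵥ (E *ᵥ Bᵀ j) = Matrix.trace (Eᵀ * E * (B * Bᵀ)) := by
    rw [aux_BBt B, Finset.mul_sum, Matrix.trace_sum]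
    refine Finset.sum_congr rfl fun j _ => ?_
    symm
    rw [aux_trace_vbb, ← Matrix.mulVec_mulVec, Matrix.dotProduct_mulVec,
      Matrix.vecMul_transpose]
  have hμt : μ * t ≤ ∑ j, (E *ᵥ Bᵀ j) ⬝ᵥ (E *ᵥ Bᵀ j) := by
    rw [hS]
    have hE' : (Eᵀ * E).PosSemidef := by
      have := Matrix.posSemidef_conjTranspose_mul_self E
      rwa [Matrix.conjTranspose_eq_transpose_of_trivial] at this
    have h0 := aux_trace_mul_psd_nonneg hE' (aux_psd_sub hBB)
    rw [Matrix.mul_sub, Matrix.trace_sub] at h0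
    have h1 : Matrix.trace (Eᵀ * E * (μ • 1)) = μ * t := by
      rw [Matrix.mul_smul, mul_one, Matrix.trace_smul, ht]
      simp
    rw [h1] at h0
    linarith
  -- put everything together
  simp only [htr]
  rcases Nat.eq_zero_or_pos q with hq | hq
  · subst hq
    have hT0 : T = 0 := by rw [hTsum]; simp
    rw [hT0]
    simpa using ht0
  · have hT0 : 0 < T := by
      rw [hTsum]
      exact Finset.sum_pos (fun j _ => hc0 j)
        (Finset.univ_nonempty_iff.mpr (Fin.pos_iff_nonempty.mp hq))
    have hTne : T ≠ 0 := hT0.ne'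
    calc ∑ j, (Bᵀ j ⬝ᵥ Bᵀ j / T) * (t - ((E *ᵥ Bᵀ j) ⬝ᵥ (E *ᵥ Bᵀ j)) / (Bᵀ j ⬝ᵥ Bᵀ j))
        = (∑ j, ((Bᵀ j ⬝ᵥ Bᵀ j) * t - (E *ᵥ Bᵀ j) ⬝ᵥ (E *ᵥ Bᵀ j))) / T := by
          rw [Finset.sum_div]
          refine Finset.sum_congr rfl fun j _ => ?_
          have hcne : Bᵀ j ⬝ᵥ Bᵀ j ≠ 0 := (hc0 j).ne'
          field_simp
      _ = (T * t - ∑ j, (E *ᵥ Bᵀ j) ⬝ᵥ (E *ᵥ Bᵀ j)) / T := by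
          rw [Finset.sum_sub_distrib, ← Finset.sum_mul, ← hTsum]
      _ ≤ (T * t - μ * t) / T := by
          have hsub : T * t - ∑ j, (E *ᵥ Bᵀ j) ⬝ᵥ (E *ᵥ Bᵀ j) ≤ T * t - μ * t := by
            linarith [hμt]
          exact div_le_div_of_nonneg_right hsub hT0.le
      _ = (1 - μ / T) * t := by field_simp
end

section
/- (Randomized coordinate descent for positive definite A, one-step expected decrease.) Let A be an m×m real symmetric positive definite matrix, B an n×q real matrix with full row rank (so B† = Bᵀ(BBᵀ)⁻¹), and X*, X m×n real matrices with C = AX*B. For i ∈ {1,…,m} set p_i = A_{ii}/Tr(A) and define X⁺_i = X − e_i((A_{:,i})ᵀXB − C_{i,:})B†/A_{ii}, where e_i is the i-th standard basis column vector of ℝᵐ. Then Σ_{i=1}^{m} p_i ‖X⁺_i − X*‖²_{F(A)} ≤ (1 − λ_min(A)/Tr(A))·‖X − X*‖²_{F(A)}, where ‖M‖²_{F(A)} = Tr(MᵀAM). -/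
open Matrix

private lemma aux_row {m n q : ℕ} (M : Matrix (Fin m) (Fin n) ℝ) (N : Matrix (Fin n) (Fin q) ℝ)
    (i : Fin m) : (M * N) i = M i ᵥ* N := by
  funext j; simp [mul_apply, vecMul, dotProduct]

private lemma aux_trace1 {m n : ℕ} (i : Fin m) (u : Fin n → ℝ) (M : Matrix (Fin m) (Fin n) ℝ) :
    trace ((vecMulVec (Pi.single i 1) u)ᵀ * M) = u ⬝ᵥ M i := by
  simp [trace, diag, mul_apply, vecMulVec_apply, dotProduct, Pi.single_apply,
    Finset.sum_comm (γ := Fin m)]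

private lemma aux_rowD {m n : ℕ} (i : Fin m) (u : Fin n → ℝ) (A : Matrix (Fin m) (Fin m) ℝ) :
    (A * vecMulVec (Pi.single i 1) u) i = A i i • u := by
  funext j; simp [mul_apply, vecMulVec_apply, Pi.single_apply, mul_comm]

private lemma aux_ct {m n : ℕ} (M : Matrix (Fin m) (Fin n) ℝ) : Mᴴ = Mᵀ := by
  funext i j; simp [conjTranspose_apply]

private lemma aux_trace_nonneg_s16 {n : ℕ} {M : Matrix (Fin n) (Fin n) ℝ} (hM : M.PosSemidef) :
    0 ≤ trace M := by
  refine Finset.sum_nonneg fun j _ => ?_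
  have := hM.dotProduct_mulVec_nonneg (Pi.single j 1)
  simpa [dotProduct, mulVec, Pi.single_apply] using this

private lemma aux_trace_sq {m n : ℕ} (N : Matrix (Fin m) (Fin n) ℝ) :
    trace (Nᵀ * N) = ∑ i, ∑ j, (N i j)^2 := by
  simp only [trace, diag_apply, mul_apply, transpose_apply, sq]
  rw [Finset.sum_comm]

private lemma aux_BBd {n q : ℕ} (B : Matrix (Fin n) (Fin q) ℝ) (hB : B.rank = n) :
    B * (Bᵀ * (B * Bᵀ)⁻¹) = 1 := by
  have h1 : (B * Bᵀ).rank = n := by rw [Matrix.rank_self_mul_transpose, hB]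
  have htop : LinearMap.range (B * Bᵀ).mulVecLin = ⊤ := by
    apply Submodule.eq_top_of_finrank_eq
    rw [← Matrix.rank, h1, Module.finrank_fintype_fun_eq_card, Fintype.card_fin]
  have hsurj : Function.Surjective ((B * Bᵀ).mulVec) := by
    have := LinearMap.range_eq_top.mp htop
    intro y
    obtain ⟨x, hx⟩ := this y
    exact ⟨x, by simpa only [Matrix.mulVecLin_apply] using hx⟩
  have hU : IsUnit (B * Bᵀ) := Matrix.mulVec_surjective_iff_isUnit.mp hsurj
  rw [← Matrix.mul_assoc]
  exact Matrix.mul_nonsing_inv _ ((Matrix.isUnit_iff_isUnit_det _).mp hU)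

private lemma aux_psd {m : ℕ} (A : Matrix (Fin m) (Fin m) ℝ) (hA : A.PosDef) :
    (A * A - (⨅ k, hA.1.eigenvalues k) • A).PosSemidef := by
  set l := ⨅ k, hA.1.eigenvalues k with hl
  set μ : Fin m → ℝ := hA.1.eigenvalues with hμ
  set V : Matrix (Fin m) (Fin m) ℝ := (hA.1.eigenvectorUnitary : Matrix (Fin m) (Fin m) ℝ) with hV
  have hVV' : star V * V = 1 := (Matrix.mem_unitaryGroup_iff').mp hA.1.eigenvectorUnitary.2
  have hspec : A = V * Matrix.diagonal μ * star V := by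
    have := hA.1.spectral_theorem
    have hdiag : (RCLike.ofReal ∘ hA.1.eigenvalues : Fin m → ℝ) = μ := by
      funext k; simp [RCLike.ofReal, hμ]
    rw [hdiag] at this; exact this
  have hsm : l • A = V * Matrix.diagonal (fun k => l * μ k) * star V := by
    rw [hspec, ← smul_mul_assoc, ← mul_smul_comm]
    congr 2
    funext a b
    simp [Matrix.diagonal, Matrix.of_apply, Pi.smul_apply, smul_eq_mul, mul_ite, mul_zero]
  have key : A * A - l • A = V * Matrix.diagonal (fun k => μ k * μ k - l * μ k) * star V := by
    rw [hsm]
    nth_rewrite 1 [hspec]; nth_rewrite 1 [hspec]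
    have h2 : V * Matrix.diagonal μ * star V * (V * Matrix.diagonal μ * star V)
        = V * (Matrix.diagonal μ * (star V * V) * Matrix.diagonal μ) * star V := by
      simp only [Matrix.mul_assoc]
    rw [h2, hVV']
    simp only [Matrix.mul_one, Matrix.diagonal_mul_diagonal]
    rw [← Matrix.sub_mul, ← Matrix.mul_sub, Matrix.diagonal_sub]
  rw [key, Matrix.star_eq_conjTranspose]
  refine Matrix.PosSemidef.mul_mul_conjTranspose_same ?_ V
  refine Matrix.PosSemidef.diagonal fun k => ?_
  simp only [Pi.zero_apply]
  have h1 : 0 < μ k := hA.eigenvalues_pos k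
  have h2 : l ≤ μ k := ciInf_le (Finite.bddBelow_range _) k
  nlinarith

/-- randomized coordinate descent for positive definite `A`
(CD-pd), one-step expected decrease in the `A`-weighted Frobenius norm. -/
theorem stmt_16 {m n q : ℕ}
    (A : Matrix (Fin m) (Fin m) ℝ) (hA : A.PosDef)
    (B : Matrix (Fin n) (Fin q) ℝ) (hB : B.rank = n)
    (Xs X : Matrix (Fin m) (Fin n) ℝ) :
    let C : Matrix (Fin m) (Fin q) ℝ := A * Xs * B
    let Bd : Matrix (Fin q) (Fin n) ℝ := Bᵀ * (B * Bᵀ)⁻¹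
    let Xp : Fin m → Matrix (Fin m) (Fin n) ℝ := fun i =>
      X - (1 / A i i) • vecMulVec (Pi.single i 1) (((Aᵀ i ᵥ* X) ᵥ* B - C i) ᵥ* Bd)
    ∑ i, (A i i / Matrix.trace A) *
        Matrix.trace ((Xp i - Xs)ᵀ * A * (Xp i - Xs))
      ≤ (1 - (⨅ k, hA.1.eigenvalues k) / Matrix.trace A) *
          Matrix.trace ((X - Xs)ᵀ * A * (X - Xs)) := by
  intro C Bd Xp
  rcases Nat.eq_zero_or_pos m with hm | hm
  · subst hm
    have hz : trace ((X - Xs)ᵀ * A * (X - Xs)) = 0 := by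
      simp [trace, diag_apply, mul_apply]
    rw [hz]
    simp
  -- main case
  have hAsymm : Aᵀ = A := aux_ct A ▸ hA.1
  set R : Matrix (Fin m) (Fin n) ℝ := X - Xs with hR
  have hBBd : B * Bd = 1 := aux_BBd B hB
  have hAii : ∀ i, 0 < A i i := by
    intro i
    have hne : (Pi.single i 1 : Fin m → ℝ) ≠ 0 := by
      intro h; simpa using congrFun h i
    have := hA.dotProduct_mulVec_pos hne
    simpa [dotProduct, mulVec, Pi.single_apply] using this
  -- step 1 : the update simplifies
  have hXp : ∀ i, Xp i - Xs = R - (1 / A i i) • vecMulVec (Pi.single i 1) ((A * R) i) := by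
    intro i
    have e1 : C i = (Aᵀ i ᵥ* Xs) ᵥ* B := by
      show (A * Xs * B) i = _
      rw [aux_row, aux_row, hAsymm]
    have h1 : ((Aᵀ i ᵥ* X) ᵥ* B - C i) ᵥ* Bd = (A * R) i := by
      rw [e1, ← Matrix.sub_vecMul, ← Matrix.vecMul_sub, Matrix.vecMul_vecMul, hBBd,
        Matrix.vecMul_one, hAsymm, aux_row]
    show X - _ - Xs = _
    rw [h1, sub_right_comm]
  clear_value R
  -- step 2 : per-index trace value
  set T : ℝ := trace (Rᵀ * A * R) with hT
  have htr : ∀ i, trace ((Xp i - Xs)ᵀ * A * (Xp i - Xs))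
      = T - (∑ j, ((A * R) i j)^2) / A i i := by
    intro i
    rw [hXp i]
    set c : ℝ := 1 / A i i with hc
    set D : Matrix (Fin m) (Fin n) ℝ := vecMulVec (Pi.single i 1) ((A * R) i) with hD
    have vA : trace (Dᵀ * A * R) = ∑ j, ((A * R) i j)^2 := by
      rw [Matrix.mul_assoc, hD, aux_trace1]
      simp [dotProduct, sq]
    have vB : trace (Rᵀ * A * D) = ∑ j, ((A * R) i j)^2 := by
      rw [← Matrix.trace_transpose]
      have : (Rᵀ * A * D)ᵀ = Dᵀ * (A * R) := by
        rw [Matrix.transpose_mul, Matrix.transpose_mul, Matrix.transpose_transpose, hAsymm]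
      rw [this, ← Matrix.mul_assoc, vA]
    have vC : trace (Dᵀ * A * D) = A i i * ∑ j, ((A * R) i j)^2 := by
      rw [Matrix.mul_assoc, hD, aux_trace1, aux_rowD, dotProduct_smul]
      simp [dotProduct, sq, smul_eq_mul]
    have expand : (R - c • D)ᵀ * A * (R - c • D)
        = Rᵀ * A * R - c • (Rᵀ * A * D) - (c • (Dᵀ * A * R) - (c * c) • (Dᵀ * A * D)) := by
      rw [Matrix.transpose_sub, Matrix.transpose_smul]
      rw [Matrix.sub_mul, Matrix.sub_mul, Matrix.mul_sub, Matrix.mul_sub]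
      simp only [Matrix.smul_mul, Matrix.mul_smul, smul_smul]
    rw [expand]
    simp only [Matrix.trace_sub, Matrix.trace_smul, smul_eq_mul]
    rw [vA, vB, vC, hc, ← hT]
    have h0 : A i i ≠ 0 := (hAii i).ne'
    field_simp
    ring
  -- step 3 : sum things up
  have htA : 0 < trace A := by
    have : trace A = ∑ i, A i i := rfl
    rw [this]
    have : Nonempty (Fin m) := Fin.pos_iff_nonempty.mp hm
    exact Finset.sum_pos (fun i _ => hAii i) Finset.univ_nonempty
  set t : ℝ := trace A with ht
  set S : ℝ := ∑ i, ∑ j, ((A * R) i j)^2 with hS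
  have hsum : ∑ i, (A i i / t) * trace ((Xp i - Xs)ᵀ * A * (Xp i - Xs)) = T - S / t := by
    have : ∀ i ∈ Finset.univ, (A i i / t) * trace ((Xp i - Xs)ᵀ * A * (Xp i - Xs))
        = (A i i * T) / t - (∑ j, ((A * R) i j)^2) / t := by
      intro i _
      rw [htr i]
      have h0 : A i i ≠ 0 := (hAii i).ne'
      field_simp
    rw [Finset.sum_congr rfl this, Finset.sum_sub_distrib, ← Finset.sum_div, ← Finset.sum_div,
      ← Finset.sum_mul]
    have : (∑ i, A i i) = t := rfl
    rw [this, ← hS]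
    field_simp
  rw [hsum]
  -- step 4 : the key inequality  l * T ≤ S
  set l : ℝ := ⨅ k, hA.1.eigenvalues k with hl
  have hkey : l * T ≤ S := by
    have hpsd := aux_psd A hA
    have hpsd2 : ((Rᴴ) * (A * A - l • A) * R).PosSemidef :=
      hpsd.conjTranspose_mul_mul_same R
    have h0 := aux_trace_nonneg_s16 hpsd2
    have hexp : (Rᴴ) * (A * A - l • A) * R = Rᵀ * (A * A) * R - l • (Rᵀ * A * R) := by
      rw [aux_ct, Matrix.mul_sub, Matrix.sub_mul]
      simp only [Matrix.smul_mul, Matrix.mul_smul]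
    rw [hexp, Matrix.trace_sub, Matrix.trace_smul, smul_eq_mul] at h0
    have hS2 : trace (Rᵀ * (A * A) * R) = S := by
      have e2 : Rᵀ * (A * A) * R = (A * R)ᵀ * (A * R) := by
        rw [Matrix.transpose_mul, hAsymm]
        simp only [Matrix.mul_assoc]
      rw [e2, aux_trace_sq, hS]
    rw [hS2, ← hT] at h0
    linarith
  -- step 5 : conclude
  have hTnn : 0 ≤ T := by
    have : (Rᴴ * A * R).PosSemidef := hA.posSemidef.conjTranspose_mul_mul_same R
    have := aux_trace_nonneg_s16 this
    rwa [aux_ct, ← hT] at this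
  have heq : (1 - l / t) * T = T - (l * T) / t := by ring
  rw [heq]
  have h5 : (l * T) / t ≤ S / t := by gcongr
  linarith
end

section
/- (Norm of the expected error, one-step contraction.) Let G be an m×m symmetric positive definite real matrix with positive definite square root G^{1/2}, A a p×m real matrix, B an n×q real matrix, and for each k in a finite index set let S_k be a p×τ₁(k) real matrix and P_k a q×τ₂(k) real matrix such that S_kᵀAG⁻¹AᵀS_k and P_kᵀBᵀBP_k are invertible, with weights p_k ≥ 0 summing to 1. Define Z₁'ᵏ = G⁻¹AᵀS_k(S_kᵀAG⁻¹AᵀS_k)⁻¹S_kᵀA, Ẑ₁ᵏ = G^{1/2}Z₁'ᵏG^{-1/2}, Z₂ᵏ = BP_k(P_kᵀBᵀBP_k)⁻¹P_kᵀBᵀ, and ρ = 1 − λ_min(Σ_k p_k (Z₂ᵏ ⊗ Ẑ₁ᵏ)). Let X*, X be m×n real matrices, and for each k set X⁺_k = X − Z₁'ᵏ(X − X*)Z₂ᵏ. Then ‖Σ_k p_k (X⁺_k − X*)‖_{F(G)} ≤ ρ·‖X − X*‖_{F(G)}. -/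
open Matrix Kronecker

section Aux

lemma real_conjTranspose' {ι κ : Type*} (Q : Matrix ι κ ℝ) : Qᴴ = Qᵀ := by
  ext i j; simp [Matrix.conjTranspose_apply]

lemma psd_smul' {ι : Type*} [Fintype ι] {A : Matrix ι ι ℝ} (hA : A.PosSemidef) {c : ℝ}
    (hc : 0 ≤ c) : (c • A).PosSemidef := by
  refine Matrix.PosSemidef.of_dotProduct_mulVec_nonneg ?_ fun x => ?_
  · unfold Matrix.IsHermitian
    rw [Matrix.conjTranspose_smul, hA.1]; simp
  · rw [Matrix.smul_mulVec, dotProduct_smul]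
    exact mul_nonneg hc (hA.dotProduct_mulVec_nonneg x)

lemma psd_of_sym_idem' {ι : Type*} [Fintype ι] {Q : Matrix ι ι ℝ} (h1 : Qᵀ = Q)
    (h2 : Q * Q = Q) : Q.PosSemidef := by
  have : Q = Qᴴ * Q := by rw [real_conjTranspose', h1, h2]
  rw [this]
  exact Matrix.posSemidef_conjTranspose_mul_self Q

lemma psd_sum' {ι κ : Type*} [Fintype κ] (s : Finset ι) (f : ι → Matrix κ κ ℝ)
    (h : ∀ i ∈ s, (f i).PosSemidef) : (∑ i ∈ s, f i).PosSemidef :=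
  Finset.sum_induction f _ (fun _ _ ha hb => ha.add hb) Matrix.PosSemidef.zero h

lemma sum_mulVec' {ι κ κ' : Type*} [Fintype κ'] (s : Finset ι) (f : ι → Matrix κ κ' ℝ)
    (v : κ' → ℝ) : (∑ i ∈ s, f i) *ᵥ v = ∑ i ∈ s, f i *ᵥ v := by
  classical
  induction s using Finset.induction_on with
  | empty => simp [Matrix.zero_mulVec]
  | insert _ _ hne ih => simp [Finset.sum_insert hne, Matrix.add_mulVec, ih]

lemma eig_le_one' {ι : Type*} [Fintype ι] [DecidableEq ι] {M : Matrix ι ι ℝ}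
    (hM : M.IsHermitian) (h1M : ((1 : Matrix ι ι ℝ) - M).PosSemidef) (i : ι) :
    hM.eigenvalues i ≤ 1 := by
  have hx := h1M.dotProduct_mulVec_nonneg ⇑(hM.eigenvectorBasis i)
  rw [Matrix.sub_mulVec, Matrix.one_mulVec, dotProduct_sub] at hx
  have h1 : dotProduct (star ⇑(hM.eigenvectorBasis i)) ⇑(hM.eigenvectorBasis i) = 1 := by
    rw [dotProduct_comm, ← EuclideanSpace.inner_eq_star_dotProduct]
    have := hM.eigenvectorBasis.orthonormal.1 i
    rw [@inner_self_eq_norm_sq_to_K ℝ, this]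
    norm_num
  have h2 : dotProduct (star ⇑(hM.eigenvectorBasis i)) (M *ᵥ ⇑(hM.eigenvectorBasis i))
      = hM.eigenvalues i := by
    have := hM.eigenvalues_eq i
    simpa using this.symm
  rw [h1, h2] at hx
  linarith

lemma shift_psd' {ι : Type*} [Fintype ι] [DecidableEq ι] {M : Matrix ι ι ℝ}
    (hM : M.IsHermitian) {c : ℝ} (hc : ∀ i, c ≤ hM.eigenvalues i) :
    (M - c • (1 : Matrix ι ι ℝ)).PosSemidef := by
  set U : Matrix ι ι ℝ := (Matrix.IsHermitian.eigenvectorUnitary hM : Matrix ι ι ℝ) with hUdef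
  have hU : U * star U = 1 :=
    (Matrix.mem_unitaryGroup_iff).mp (Matrix.IsHermitian.eigenvectorUnitary hM).2
  have key : M - c • (1 : Matrix ι ι ℝ)
      = U * Matrix.diagonal (fun i => hM.eigenvalues i - c) * star U := by
    conv_lhs => rw [hM.spectral_theorem, ← hU]
    have : (Matrix.diagonal (RCLike.ofReal ∘ hM.eigenvalues) : Matrix ι ι ℝ)
        = Matrix.diagonal hM.eigenvalues := by
      simp [Function.comp]
    rw [this]
    have h2 : c • (U * star U) = U * (c • (1 : Matrix ι ι ℝ)) * star U := by
      rw [mul_smul_comm, smul_mul_assoc, mul_one]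
    rw [Unitary.conjStarAlgAut_apply, ← hUdef]
    rw [h2, ← sub_mul, ← mul_sub]
    congr 1
    congr 1
    rw [← Matrix.diagonal_one, ← Matrix.diagonal_smul, Matrix.diagonal_sub]
    simp
  rw [key]
  have hd : (Matrix.diagonal (fun i => hM.eigenvalues i - c)).PosSemidef :=
    Matrix.PosSemidef.diagonal (fun i => by simpa using hc i)
  have := hd.mul_mul_conjTranspose_same U
  rwa [show Uᴴ = star U from rfl] at this

open scoped MatrixOrder in
lemma core_spectral' {ι : Type*} [Fintype ι] [DecidableEq ι] {M : Matrix ι ι ℝ}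
    (hM : M.IsHermitian) (h1M : ((1 : Matrix ι ι ℝ) - M).PosSemidef) (v : ι → ℝ) :
    Real.sqrt (dotProduct (((1 : Matrix ι ι ℝ) - M) *ᵥ v)
        (((1 : Matrix ι ι ℝ) - M) *ᵥ v))
      ≤ (1 - ⨅ i, hM.eigenvalues i) * Real.sqrt (dotProduct v v) := by
  set c := ⨅ i, hM.eigenvalues i with hcdef
  set ρ := 1 - c with hρdef
  set T := (1 : Matrix ι ι ℝ) - M with hTdef
  have hbdd : BddBelow (Set.range hM.eigenvalues) := (Set.finite_range _).bddBelow
  have hcle : ∀ i, c ≤ hM.eigenvalues i := fun i => ciInf_le hbdd i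
  have hρ0 : 0 ≤ ρ := by
    rcases isEmpty_or_nonempty ι with h | h
    · have : c = 0 := by
        rw [hcdef, iInf_of_isEmpty]
        exact Real.sInf_empty
      simp [hρdef, this]
    · obtain ⟨i⟩ := h
      have := (hcle i).trans (eig_le_one' hM h1M i)
      linarith
  have hshift : (ρ • (1 : Matrix ι ι ℝ) - T).PosSemidef := by
    have : ρ • (1 : Matrix ι ι ℝ) - T = M - c • 1 := by
      rw [hρdef, hTdef, sub_smul, one_smul]
      abel
    rw [this]
    exact shift_psd' hM hcle
  have hTsym : Tᵀ = T := by
    have h1 : T.IsHermitian := h1M.1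
    conv_lhs => rw [← h1]
    ext i j; simp [Matrix.conjTranspose_apply]
  have hsq : CFC.sqrt T * CFC.sqrt T = T := CFC.sqrt_mul_sqrt_self T h1M.nonneg
  have hmid : CFC.sqrt T * (ρ • (1 : Matrix ι ι ℝ) - T) * CFC.sqrt T
      = ρ • T - T * T := by
    rw [mul_sub, sub_mul, mul_smul_comm, smul_mul_assoc, mul_one, hsq]
    congr 1
    have habs : ∀ (s T' : Matrix ι ι ℝ), s * s = T' → s * T' * s = T' * T' := by
      rintro s _ rfl; simp [mul_assoc]
    exact habs _ _ hsq
  have hexp : (ρ * ρ) • (1 : Matrix ι ι ℝ) - T * T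
      = ρ • (ρ • (1 : Matrix ι ι ℝ) - T)
        + CFC.sqrt T * (ρ • (1 : Matrix ι ι ℝ) - T) * CFC.sqrt T := by
    rw [hmid, smul_sub, smul_smul]
    abel
  have hkey : ((ρ * ρ) • (1 : Matrix ι ι ℝ) - T * T).PosSemidef := by
    rw [hexp]
    refine (psd_smul' hshift hρ0).add ?_
    have := hshift.mul_mul_conjTranspose_same (CFC.sqrt T)
    have hsh : (CFC.sqrt T)ᴴ = CFC.sqrt T := (CFC.sqrt_nonneg T).posSemidef.1
    rwa [hsh] at this
  have hq := hkey.dotProduct_mulVec_nonneg v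
  have hstar : star v = v := rfl
  rw [hstar, Matrix.sub_mulVec, dotProduct_sub, Matrix.smul_mulVec,
    Matrix.one_mulVec, dotProduct_smul, ← Matrix.mulVec_mulVec,
    dotProduct_mulVec, smul_eq_mul] at hq
  have hTv : dotProduct (T *ᵥ v) (T *ᵥ v) = dotProduct (v ᵥ* T) (T *ᵥ v) := by
    rw [← hTsym, Matrix.vecMul_transpose, hTsym]
  have hq2 : dotProduct (T *ᵥ v) (T *ᵥ v) ≤ (ρ * ρ) * dotProduct v v := by
    rw [hTv]; linarith [hq]
  calc Real.sqrt (dotProduct (T *ᵥ v) (T *ᵥ v))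
      ≤ Real.sqrt ((ρ * ρ) * dotProduct v v) := Real.sqrt_le_sqrt hq2
    _ = ρ * Real.sqrt (dotProduct v v) := by
        rw [Real.sqrt_mul (mul_self_nonneg ρ), Real.sqrt_mul_self hρ0]

lemma proj_sym' {l τ : Type*} [Fintype l] [Fintype τ] [DecidableEq τ] (V : Matrix l τ ℝ) :
    (V * (Vᵀ * V)⁻¹ * Vᵀ)ᵀ = V * (Vᵀ * V)⁻¹ * Vᵀ := by
  simp [Matrix.transpose_mul, Matrix.transpose_nonsing_inv, Matrix.mul_assoc]

lemma proj_idem' {l τ : Type*} [Fintype l] [Fintype τ] [DecidableEq τ] (V : Matrix l τ ℝ)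
    (h : IsUnit (Vᵀ * V).det) :
    (V * (Vᵀ * V)⁻¹ * Vᵀ) * (V * (Vᵀ * V)⁻¹ * Vᵀ) = V * (Vᵀ * V)⁻¹ * Vᵀ := by
  have h1 : (Vᵀ * V)⁻¹ * (Vᵀ * V) = 1 := Matrix.nonsing_inv_mul _ h
  calc V * (Vᵀ * V)⁻¹ * Vᵀ * (V * (Vᵀ * V)⁻¹ * Vᵀ)
      = V * ((Vᵀ * V)⁻¹ * (Vᵀ * V)) * ((Vᵀ * V)⁻¹ * Vᵀ) := by simp only [Matrix.mul_assoc]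
    _ = V * (Vᵀ * V)⁻¹ * Vᵀ := by rw [h1, Matrix.mul_one, Matrix.mul_assoc]

lemma kron_mulVec' {n m : ℕ} (Z : Matrix (Fin n) (Fin n) ℝ) (W : Matrix (Fin m) (Fin m) ℝ)
    (F : Matrix (Fin m) (Fin n) ℝ) (hZ : Zᵀ = Z) (x : Fin n × Fin m) :
    ((Z ⊗ₖ W) *ᵥ (fun y : Fin n × Fin m => F y.2 y.1)) x = (W * F * Z) x.2 x.1 := by
  have hZ' : ∀ a b, Z a b = Z b a := fun a b => by
    have := congrFun (congrFun hZ a) b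
    simpa [Matrix.transpose_apply] using this.symm
  simp only [Matrix.mulVec, dotProduct, Matrix.mul_apply, Matrix.kroneckerMap_apply,
    Fintype.sum_prod_type, Finset.sum_mul]
  refine Finset.sum_congr rfl fun j' _ => Finset.sum_congr rfl fun i' _ => ?_
  rw [hZ' x.1 j']
  ring

lemma normFG_vec' {m n : ℕ} (G Gh : Matrix (Fin m) (Fin m) ℝ) (hGhsq : Gh * Gh = G)
    (hGhsym : Ghᵀ = Gh) (N : Matrix (Fin m) (Fin n) ℝ) :
    Matrix.trace (Nᵀ * G * N) = dotProduct (fun x : Fin n × Fin m => (Gh * N) x.2 x.1)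
      (fun x : Fin n × Fin m => (Gh * N) x.2 x.1) := by
  have h1 : Nᵀ * G * N = (Gh * N)ᵀ * (Gh * N) := by
    rw [Matrix.transpose_mul, hGhsym, ← hGhsq]
    simp only [Matrix.mul_assoc]
  rw [h1]
  simp only [Matrix.trace, Matrix.diag, Matrix.mul_apply, Matrix.transpose_apply,
    dotProduct, Fintype.sum_prod_type]

end Aux

/-- one-step contraction for the norm of the expected error:
`‖E[X⁺ − X*]‖_{F(G)} ≤ ρ ‖X − X*‖_{F(G)}` with
`ρ = 1 − λ_min(E[Z₂ ⊗ Ẑ₁])`. -/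
theorem stmt_19 {m n p q r : ℕ} (τ₁ τ₂ : Fin r → ℕ)
    (G : Matrix (Fin m) (Fin m) ℝ) (hG : G.PosDef)
    (Gh : Matrix (Fin m) (Fin m) ℝ) (hGh : Gh.PosDef) (hGhsq : Gh * Gh = G)
    (A : Matrix (Fin p) (Fin m) ℝ) (B : Matrix (Fin n) (Fin q) ℝ)
    (S : ∀ k : Fin r, Matrix (Fin p) (Fin (τ₁ k)) ℝ)
    (P : ∀ k : Fin r, Matrix (Fin q) (Fin (τ₂ k)) ℝ)
    (hS : ∀ k, IsUnit ((S k)ᵀ * A * G⁻¹ * Aᵀ * S k).det)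
    (hP : ∀ k, IsUnit ((P k)ᵀ * Bᵀ * B * P k).det)
    (w : Fin r → ℝ) (hw : ∀ k, 0 ≤ w k) (hw1 : ∑ k, w k = 1)
    (Xs X : Matrix (Fin m) (Fin n) ℝ) :
    let Z1 : Fin r → Matrix (Fin m) (Fin m) ℝ := fun k =>
      G⁻¹ * Aᵀ * S k * ((S k)ᵀ * A * G⁻¹ * Aᵀ * S k)⁻¹ * (S k)ᵀ * A
    let Zh1 : Fin r → Matrix (Fin m) (Fin m) ℝ := fun k => Gh * Z1 k * Gh⁻¹
    let Z2 : Fin r → Matrix (Fin n) (Fin n) ℝ := fun k =>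
      B * P k * ((P k)ᵀ * Bᵀ * B * P k)⁻¹ * (P k)ᵀ * Bᵀ
    let Xp : Fin r → Matrix (Fin m) (Fin n) ℝ := fun k =>
      X - Z1 k * (X - Xs) * Z2 k
    ∀ (hM : (∑ k, w k • (Z2 k ⊗ₖ Zh1 k)).IsHermitian),
      normFG G (∑ k, w k • (Xp k - Xs))
        ≤ (1 - ⨅ i, hM.eigenvalues i) * normFG G (X - Xs) := by
  intro Z1 Zh1 Z2 Xp hM
  -- basic facts about G and Gh
  have hGhsym : Ghᵀ = Gh := by rw [← real_conjTranspose', hGh.1]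
  have hGhdet : IsUnit Gh.det := isUnit_iff_ne_zero.mpr (ne_of_gt hGh.det_pos)
  have hGinv : G⁻¹ = Gh⁻¹ * Gh⁻¹ := by rw [← hGhsq, Matrix.mul_inv_rev]
  have hGhinvsym : (Gh⁻¹)ᵀ = Gh⁻¹ := by rw [Matrix.transpose_nonsing_inv, hGhsym]
  -- definitional unfoldings of the `let`s
  have hZ1def : ∀ k, Z1 k
      = G⁻¹ * Aᵀ * S k * ((S k)ᵀ * A * G⁻¹ * Aᵀ * S k)⁻¹ * (S k)ᵀ * A := fun _ => rfl
  have hZh1def : ∀ k, Zh1 k = Gh * Z1 k * Gh⁻¹ := fun _ => rfl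
  have hZ2def : ∀ k, Z2 k
      = B * P k * ((P k)ᵀ * Bᵀ * B * P k)⁻¹ * (P k)ᵀ * Bᵀ := fun _ => rfl
  have hXpdef : ∀ k, Xp k = X - Z1 k * (X - Xs) * Z2 k := fun _ => rfl
  -- Z2 as explicit projection
  have hK2 : ∀ k, (B * P k)ᵀ * (B * P k) = (P k)ᵀ * Bᵀ * B * P k := fun k => by
    simp [Matrix.transpose_mul, Matrix.mul_assoc]
  have hdet2 : ∀ k, IsUnit ((B * P k)ᵀ * (B * P k)).det := fun k => by
    rw [hK2]; exact hP k
  have hZ2V : ∀ k, Z2 k = (B * P k) * ((B * P k)ᵀ * (B * P k))⁻¹ * (B * P k)ᵀ := fun k => by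
    rw [hZ2def, hK2]
    simp [Matrix.transpose_mul, Matrix.mul_assoc]
  have hZ2sym : ∀ k, (Z2 k)ᵀ = Z2 k := fun k => by rw [hZ2V]; exact proj_sym' _
  have hZ2idem : ∀ k, Z2 k * Z2 k = Z2 k := fun k => by
    rw [hZ2V]; exact proj_idem' _ (hdet2 k)
  -- Zh1 as explicit projection
  have hK1 : ∀ k, (Gh⁻¹ * Aᵀ * S k)ᵀ * (Gh⁻¹ * Aᵀ * S k)
      = (S k)ᵀ * A * G⁻¹ * Aᵀ * S k := fun k => by
    simp [Matrix.transpose_mul, hGhinvsym, hGinv, Matrix.mul_assoc]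
  have hdet1 : ∀ k, IsUnit ((Gh⁻¹ * Aᵀ * S k)ᵀ * (Gh⁻¹ * Aᵀ * S k)).det := fun k => by
    rw [hK1]; exact hS k
  have hZh1V : ∀ k, Zh1 k
      = (Gh⁻¹ * Aᵀ * S k) * ((Gh⁻¹ * Aᵀ * S k)ᵀ * (Gh⁻¹ * Aᵀ * S k))⁻¹
        * (Gh⁻¹ * Aᵀ * S k)ᵀ := fun k => by
    rw [hZh1def, hZ1def, hK1]
    simp only [Matrix.transpose_mul, Matrix.transpose_transpose, hGhinvsym, hGinv,
      Matrix.mul_assoc]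
    rw [Matrix.mul_nonsing_inv_cancel_left _ _ hGhdet]
  have hZh1sym : ∀ k, (Zh1 k)ᵀ = Zh1 k := fun k => by rw [hZh1V]; exact proj_sym' _
  have hZh1idem : ∀ k, Zh1 k * Zh1 k = Zh1 k := fun k => by
    rw [hZh1V]; exact proj_idem' _ (hdet1 k)
  -- Kronecker products are symmetric idempotent
  have hQsym : ∀ k, (Z2 k ⊗ₖ Zh1 k)ᵀ = Z2 k ⊗ₖ Zh1 k := fun k => by
    rw [← Matrix.kroneckerMap_transpose, hZ2sym, hZh1sym]
  have hQidem : ∀ k, (Z2 k ⊗ₖ Zh1 k) * (Z2 k ⊗ₖ Zh1 k) = Z2 k ⊗ₖ Zh1 k := fun k => by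
    rw [← Matrix.mul_kronecker_mul, hZ2idem, hZh1idem]
  -- 1 - M is PSD
  have h1M : ((1 : Matrix (Fin n × Fin m) (Fin n × Fin m) ℝ)
      - ∑ k, w k • (Z2 k ⊗ₖ Zh1 k)).PosSemidef := by
    have hrw : (1 : Matrix (Fin n × Fin m) (Fin n × Fin m) ℝ)
        - ∑ k, w k • (Z2 k ⊗ₖ Zh1 k) = ∑ k, w k • (1 - Z2 k ⊗ₖ Zh1 k) := by
      simp only [smul_sub, Finset.sum_sub_distrib, ← Finset.sum_smul, hw1, one_smul]
    rw [hrw]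
    refine psd_sum' _ _ fun k _ => psd_smul' ?_ (hw k)
    refine psd_of_sym_idem' ?_ ?_
    · rw [Matrix.transpose_sub, Matrix.transpose_one, hQsym]
    · rw [mul_sub, sub_mul, sub_mul, hQidem]
      simp only [Matrix.mul_one, Matrix.one_mul, sub_self, sub_zero]
  -- expectation algebra
  have hE : ∑ k, w k • (Xp k - Xs)
      = (X - Xs) - ∑ k, w k • (Z1 k * (X - Xs) * Z2 k) := by
    have h1 : ∀ k, Xp k - Xs = (X - Xs) - Z1 k * (X - Xs) * Z2 k := fun k => by
      rw [hXpdef, sub_right_comm]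
    calc ∑ k, w k • (Xp k - Xs)
        = ∑ k, w k • ((X - Xs) - Z1 k * (X - Xs) * Z2 k) := by
          exact Finset.sum_congr rfl fun k _ => by rw [h1]
      _ = (X - Xs) - ∑ k, w k • (Z1 k * (X - Xs) * Z2 k) := by
          simp only [smul_sub, Finset.sum_sub_distrib, ← Finset.sum_smul, hw1, one_smul]
  have hGhZ1 : ∀ k, Gh * Z1 k = Zh1 k * Gh := fun k => by
    rw [hZh1def, Matrix.nonsing_inv_mul_cancel_right _ _ hGhdet]
  have hGmul : Gh * (∑ k, w k • (Xp k - Xs))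
      = Gh * (X - Xs) - ∑ k, w k • (Zh1 k * (Gh * (X - Xs)) * Z2 k) := by
    rw [hE, Matrix.mul_sub, Matrix.mul_sum]
    congr 1
    refine Finset.sum_congr rfl fun k _ => ?_
    rw [Matrix.mul_smul]
    congr 1
    calc Gh * (Z1 k * (X - Xs) * Z2 k) = (Gh * Z1 k) * (X - Xs) * Z2 k := by
          simp only [Matrix.mul_assoc]
      _ = Zh1 k * (Gh * (X - Xs)) * Z2 k := by rw [hGhZ1]; simp only [Matrix.mul_assoc]
  -- vectorization
  have hu : ((1 : Matrix (Fin n × Fin m) (Fin n × Fin m) ℝ)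
        - ∑ k, w k • (Z2 k ⊗ₖ Zh1 k)) *ᵥ (fun y : Fin n × Fin m => (Gh * (X - Xs)) y.2 y.1)
      = fun x : Fin n × Fin m => (Gh * (∑ k, w k • (Xp k - Xs))) x.2 x.1 := by
    funext x
    rw [Matrix.sub_mulVec, Matrix.one_mulVec]
    have hsumv : ((∑ k, w k • (Z2 k ⊗ₖ Zh1 k)) *ᵥ
          (fun y : Fin n × Fin m => (Gh * (X - Xs)) y.2 y.1)) x
        = (∑ k, w k • (Zh1 k * (Gh * (X - Xs)) * Z2 k)) x.2 x.1 := by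
      rw [sum_mulVec']
      simp only [Matrix.smul_mulVec, Finset.sum_apply, Pi.smul_apply,
        Matrix.sum_apply, Matrix.smul_apply, smul_eq_mul]
      refine Finset.sum_congr rfl fun k _ => ?_
      rw [kron_mulVec' _ _ _ (hZ2sym k) x]
    simp only [Pi.sub_apply, hsumv, hGmul, Matrix.sub_apply]
  -- put everything together
  have e1 : normFG G (∑ k, w k • (Xp k - Xs))
      = Real.sqrt (dotProduct
          (((1 : Matrix (Fin n × Fin m) (Fin n × Fin m) ℝ)
            - ∑ k, w k • (Z2 k ⊗ₖ Zh1 k)) *ᵥ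
              (fun y : Fin n × Fin m => (Gh * (X - Xs)) y.2 y.1))
          (((1 : Matrix (Fin n × Fin m) (Fin n × Fin m) ℝ)
            - ∑ k, w k • (Z2 k ⊗ₖ Zh1 k)) *ᵥ
              (fun y : Fin n × Fin m => (Gh * (X - Xs)) y.2 y.1))) := by
    rw [normFG, normFG_vec' G Gh hGhsq hGhsym, hu]
  have e2 : normFG G (X - Xs)
      = Real.sqrt (dotProduct (fun y : Fin n × Fin m => (Gh * (X - Xs)) y.2 y.1)
          (fun y : Fin n × Fin m => (Gh * (X - Xs)) y.2 y.1)) := by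
    rw [normFG, normFG_vec' G Gh hGhsq hGhsym]
  rw [e1, e2]
  exact core_spectral' hM h1M _
end
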